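/- arXiv:1212.1815 — 5 statements merged into one kernel-verified Lean document; each statement's English description precedes it below -/
import Mathlib

section
/- For every integer n ≥ 3 there exists a bounded convex polyhedron K ⊂ ℝ^n of dimension n such that for every nonzero vector v ∈ ℝ^n and every affine hyperplane H ⊂ ℝ^n whose direction does not contain v, the projection π : ℝ^n → H parallel to v satisfies π(K) ≠ K ∩ H. -/
open Bornology Pointwise

/-- A convex polyhedron in `ℝ^n`: a finite intersection of closed half-spaces
`{x | ℓ x ≤ c}` with `ℓ` a nonzero linear functional (the empty intersection,
i.e. all of `ℝ^n`, is allowed). -/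
def IsConvexPolyhedron (n : ℕ) (K : Set (Fin n → ℝ)) : Prop :=
  ∃ (m : ℕ) (L : Fin m → ((Fin n → ℝ) →ₗ[ℝ] ℝ)) (c : Fin m → ℝ),
    (∀ i, L i ≠ 0) ∧ K = {x | ∀ i, L i x ≤ c i}

/-- The dimension of a subset of `ℝ^n`: the dimension of its affine span. -/
noncomputable def polyDim (n : ℕ) (K : Set (Fin n → ℝ)) : ℕ :=
  Module.finrank ℝ (affineSpan ℝ K).direction

/-- `F` is a face of `K`: the intersection of `K` with a supporting hyperplane,
i.e. an affine hyperplane meeting `K` such that `K` lies in one of the two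
closed half-spaces it bounds. -/
def IsFaceOf (n : ℕ) (K F : Set (Fin n → ℝ)) : Prop :=
  ∃ (L : (Fin n → ℝ) →ₗ[ℝ] ℝ) (c : ℝ), L ≠ 0 ∧
    (K ∩ {x | L x = c}).Nonempty ∧ (∀ x ∈ K, L x ≤ c) ∧ F = K ∩ {x | L x = c}

/-- `p` is a vertex of `K`: the singleton `{p}` is a face of `K`. -/
def IsVertexOf (n : ℕ) (K : Set (Fin n → ℝ)) (p : Fin n → ℝ) : Prop :=
  IsFaceOf n K {p}

/-- An edge of `K` is a face of dimension `1`. -/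
def IsEdgeOf (n : ℕ) (K A : Set (Fin n → ℝ)) : Prop :=
  IsFaceOf n K A ∧ polyDim n A = 1

/-- A facet of `K` is a face of dimension `dim K - 1`. -/
def IsFacetOf (n : ℕ) (K F : Set (Fin n → ℝ)) : Prop :=
  IsFaceOf n K F ∧ polyDim n F + 1 = polyDim n K

/-- `A` is an unbounded edge of `K` with direction vector `v`,
i.e. `A = q + ℝ≥0·v` for some vertex `q` of `K` and `v ≠ 0`. -/
def IsUnboundedEdgeWithDir (n : ℕ) (K A : Set (Fin n → ℝ)) (v : Fin n → ℝ) : Prop :=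
  IsEdgeOf n K A ∧ ¬ IsBounded A ∧ v ≠ 0 ∧
    ∃ q, IsVertexOf n K q ∧ A = {x | ∃ t : ℝ, 0 ≤ t ∧ x = q + t • v}

/-- The recession cone of `K`. -/
def recCone (n : ℕ) (K : Set (Fin n → ℝ)) : Set (Fin n → ℝ) :=
  {v | ∀ x ∈ K, ∀ t : ℝ, 0 ≤ t → x + t • v ∈ K}

/-- The projection `π_n : ℝ^n → ℝ^n`, `(x₁,…,x_n) ↦ (x₁,…,x_{n-1},0)`. -/
def projLast (n : ℕ) (x : Fin n → ℝ) : Fin n → ℝ :=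
  fun i => if (i : ℕ) = n - 1 then 0 else x i

/-- The set `A_K`, realized inside the hyperplane `{x_n = 0}` of `ℝ^n`:
points `y = (a,0)` such that the fiber `I_a = π_n⁻¹(a,0) ∩ K` is nonempty
but does not contain `(a,0)`. -/
def AKset (n : ℕ) (K : Set (Fin n → ℝ)) : Set (Fin n → ℝ) :=
  {y | (∀ i : Fin n, (i : ℕ) = n - 1 → y i = 0) ∧
    ({x | projLast n x = y} ∩ K).Nonempty ∧ y ∉ K}

/-- `K` is in first trimming position with respect to its facet `F`. -/
def FirstTrimmingPosition (n : ℕ) (K F : Set (Fin n → ℝ)) : Prop :=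
  IsFacetOf n K F ∧
  (∀ x ∈ F, ∀ i : Fin n, (i : ℕ) = n - 2 → x i = 0) ∧
  (∀ x ∈ K, ∀ i : Fin n, (i : ℕ) = n - 2 → x i ≤ 0) ∧
  (∀ y : Fin n → ℝ, IsBounded ({x | projLast n x = y} ∩ K)) ∧
  IsBounded (AKset n K)

/-- `K` is in second trimming position with respect to its facet `F`. -/
def SecondTrimmingPosition (n : ℕ) (K F : Set (Fin n → ℝ)) : Prop :=
  IsFacetOf n K F ∧
  (∀ x ∈ F, ∀ i : Fin n, (i : ℕ) = n - 1 → x i = 0) ∧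
  (∀ x ∈ K, ∀ i : Fin n, (i : ℕ) = n - 1 → x i ≤ 0) ∧
  IsBounded (AKset n K)

/-- A polynomial map `ℝ^n → ℝ^m`: each component is given by a polynomial. -/
def IsPolynomialMap (n m : ℕ) (f : (Fin n → ℝ) → (Fin m → ℝ)) : Prop :=
  ∃ p : Fin m → MvPolynomial (Fin n) ℝ, ∀ x i, f x i = MvPolynomial.eval x (p i)

namespace NSP

open Finset

variable {n : ℕ}

/-- linear functional with coefficient vector `w` -/
noncomputable def lf (w : Fin n → ℝ) : (Fin n → ℝ) →ₗ[ℝ] ℝ where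
  toFun x := ∑ k, w k * x k
  map_add' x y := by simp [mul_add, Finset.sum_add_distrib]
  map_smul' c x := by
    simp only [Pi.smul_apply, smul_eq_mul, RingHom.id_apply, Finset.mul_sum]
    exact Finset.sum_congr rfl fun k _ => by ring

@[simp] lemma lf_apply (w x : Fin n → ℝ) : lf w x = ∑ k, w k * x k := rfl

noncomputable def bb (k : Fin n) : ℝ := 1 + ((k : ℝ) + 1) / (2 * n)
noncomputable def ee (n : ℕ) : ℝ := 1 / (2 * n)
noncomputable def tt : ℝ := 1 / 10
noncomputable def uu (c : Fin n) : Fin n → ℝ := fun k => if k = c then 1 else -(ee n * bb k)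
noncomputable def ss (j : Fin n) : ℝ := tt / (1 + ee n * bb j)
def ones (n : ℕ) : Fin n → ℝ := fun _ => 1
def negE (k : Fin n) : Fin n → ℝ := fun m => if m = k then -1 else 0
def Ee (k : Fin n) : Fin n → ℝ := fun m => if k = m then 1 else 0

noncomputable def KK (n : ℕ) : Set (Fin n → ℝ) :=
  {x | (∀ k, 0 ≤ x k) ∧ (∑ k, x k) ≤ 1 ∧ ∀ c, lf (uu c) x ≤ 1 - tt}

noncomputable def vq (c j : Fin n) : Fin n → ℝ :=
  fun k => if k = c then 1 - ss j else if k = j then ss j else 0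
noncomputable def vc (c : Fin n) : Fin n → ℝ := fun k => if k = c then 1 - tt else 0

-- numeric facts
lemma npos (k : Fin n) : (0:ℝ) < n := by
  have := k.pos; exact_mod_cast this

lemma ee_pos (k : Fin n) : 0 < ee n := by
  have := npos k; unfold ee; positivity

lemma bb_ge (k : Fin n) : 1 ≤ bb k := by
  have h := npos k
  have : 0 ≤ ((k:ℝ) + 1) / (2 * n) := by positivity
  unfold bb; linarith

lemma bb_le (k : Fin n) : bb k ≤ 3/2 := by
  have h := npos k
  have hk : ((k:ℝ) + 1) ≤ n := by
    have := k.isLt; exact_mod_cast Nat.succ_le_of_lt this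
  have h2 : ((k:ℝ) + 1) / (2 * n) ≤ 1/2 := by
    rw [div_le_iff₀ (by linarith)]; linarith
  unfold bb; linarith

lemma eb_pos (k : Fin n) : 0 < ee n * bb k :=
  mul_pos (ee_pos k) (lt_of_lt_of_le one_pos (bb_ge k))

lemma ss_pos (j : Fin n) : 0 < ss j := by
  have := eb_pos j; unfold ss tt; positivity

lemma ss_le (j : Fin n) : ss j ≤ 1/10 := by
  have h := eb_pos j
  unfold ss tt
  rw [div_le_iff₀ (by linarith)]
  nlinarith

lemma one_add_eb_pos (j : Fin n) : 0 < 1 + ee n * bb j := by have := eb_pos j; linarith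

lemma ss_mul : ∀ j : Fin n, ss j * (1 + ee n * bb j) = tt := by
  intro j; unfold ss; exact div_mul_cancel₀ tt (ne_of_gt (one_add_eb_pos j))

lemma bb_inj {j j' : Fin n} (h : bb j = bb j') : j = j' := by
  have hn := npos j
  unfold bb at h
  have : ((j:ℝ) + 1) / (2*n) = ((j':ℝ)+1)/(2*n) := by linarith
  field_simp at this
  exact Fin.ext (by exact_mod_cast add_right_cancel this)

lemma ss_inj {j j' : Fin n} (h : ss j = ss j') : j = j' := by
  apply bb_inj
  have h1 := one_add_eb_pos j
  have h2 := one_add_eb_pos j'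
  have he := ee_pos j
  unfold ss tt at h
  rw [div_eq_div_iff h1.ne' h2.ne'] at h
  have : ee n * bb j = ee n * bb j' := by linarith
  exact mul_left_cancel₀ (ne_of_gt he) this

-- sum helpers
lemma sum_one (f : Fin n → ℝ) (a : Fin n) (h : ∀ k, k ≠ a → f k = 0) :
    ∑ k, f k = f a :=
  Finset.sum_eq_single a (fun b _ hb => h b hb) (by simp)

lemma sum_two (f : Fin n → ℝ) {a b : Fin n} (hab : a ≠ b) (h : ∀ k, k ≠ a → k ≠ b → f k = 0) :
    ∑ k, f k = f a + f b := by
  have h1 : ∑ k, f k = ∑ k ∈ ({a, b} : Finset (Fin n)), f k := by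
    symm
    apply Finset.sum_subset (Finset.subset_univ _)
    intro x _ hx
    simp only [Finset.mem_insert, Finset.mem_singleton] at hx
    push_neg at hx
    exact h x hx.1 hx.2
  rw [h1, Finset.sum_pair hab]

@[simp] lemma lf_negE (k : Fin n) (x : Fin n → ℝ) : lf (negE k) x = -x k := by
  rw [lf_apply, sum_one _ k]
  · simp [negE]
  · intro m hm; simp [negE, hm]

@[simp] lemma lf_ones (x : Fin n → ℝ) : lf (ones n) x = ∑ k, x k := by
  rw [lf_apply]; simp [ones]

lemma lf_uu_vq {c j : Fin n} (hcj : c ≠ j) (d : Fin n) :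
    lf (uu d) (vq c j) = uu d c * (1 - ss j) + uu d j * ss j := by
  rw [lf_apply, sum_two (fun k => uu d k * vq c j k) hcj]
  · simp [vq, hcj.symm, if_neg (Ne.symm hcj)]
  · intro k hk1 hk2; simp [vq, hk1, hk2]

lemma uu_self (c : Fin n) : uu c c = 1 := by simp [uu]

lemma uu_ne {d k : Fin n} (h : k ≠ d) : uu d k = -(ee n * bb k) := by simp [uu, h]

lemma lf_uu_vq_self {c j : Fin n} (hcj : c ≠ j) : lf (uu c) (vq c j) = 1 - tt := by
  have h := ss_mul j
  rw [lf_uu_vq hcj, uu_self, uu_ne (Ne.symm hcj)]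
  ring_nf
  ring_nf at h
  linarith

lemma lf_uu_vc (d c : Fin n) :
    lf (uu d) (vc c) = uu d c * (1 - tt) := by
  rw [lf_apply, sum_one (fun k => uu d k * vc c k) c]
  · simp [vc]
  · intro k hk; simp [vc, hk]

lemma sum_vq {c j : Fin n} (hcj : c ≠ j) : ∑ k, vq c j k = 1 := by
  rw [sum_two (vq c j) hcj]
  · simp [vq, if_neg (Ne.symm hcj)]
  · intro k h1 h2; simp [vq, h1, h2]

lemma sum_vc (c : Fin n) : ∑ k, vc c k = 1 - tt := by
  rw [sum_one (vc c) c]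
  · simp [vc]
  · intro k h; simp [vc, h]

-- membership
lemma tt_pos : (0:ℝ) < tt := by norm_num [tt]

lemma zero_mem : (0 : Fin n → ℝ) ∈ KK n := by
  refine ⟨fun k => le_refl 0, by simp, fun c => ?_⟩
  simp [tt]
  norm_num

lemma vc_mem (c : Fin n) : vc c ∈ KK n := by
  refine ⟨fun k => ?_, ?_, fun d => ?_⟩
  · unfold vc; split
    · norm_num [tt]
    · exact le_refl 0
  · rw [sum_vc]; norm_num [tt]
  · rw [lf_uu_vc]
    by_cases hdc : d = c
    · subst hdc; rw [uu_self]; norm_num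
    · rw [uu_ne (fun h : c = d => hdc h.symm)]
      have h1 := eb_pos (n := n) c
      have h2 : (0:ℝ) < 1 - tt := by norm_num [tt]
      nlinarith

lemma vq_mem {c j : Fin n} (hcj : c ≠ j) : vq c j ∈ KK n := by
  have hs0 := ss_pos j
  have hs1 := ss_le j
  refine ⟨fun k => ?_, le_of_eq (sum_vq hcj), fun d => ?_⟩
  · unfold vq; split
    · linarith
    · split
      · linarith
      · exact le_refl 0
  · by_cases hdc : d = c
    · subst hdc; rw [lf_uu_vq_self hcj]
    · rw [lf_uu_vq hcj]
      by_cases hdj : d = j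
      · subst hdj
        rw [uu_ne (fun h : c = d => hdc h.symm), uu_self]
        have h1 := eb_pos (n := n) c
        have htt : tt = 1/10 := rfl
        nlinarith
      · rw [uu_ne (fun h : c = d => hdc h.symm), uu_ne (fun h : j = d => hdj h.symm)]
        have h1 := eb_pos (n := n) c
        have h2 := eb_pos (n := n) j
        have htt : tt = 1/10 := rfl
        nlinarith

lemma Ee_not_mem (a : Fin n) : Ee a ∉ KK n := by
  intro h
  have h3 := h.2.2 a
  have : lf (uu a) (Ee a) = 1 := by
    rw [lf_apply, sum_one (fun k => uu a k * Ee a k) a]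
    · simp [uu, Ee]
    · intro k hk; simp [Ee, Ne.symm hk]
  rw [this] at h3
  have : tt = 1/10 := rfl
  linarith

-- balance lemma
lemma balance (d : Fin n → ℝ) {i j : Fin n} (hi : 0 < d i) (hj : d j < 0) :
    ∃ lam : Fin n → ℝ, (∀ k, 0 < lam k) ∧ ∑ k, lam k * d k = 0 := by
  have key : ∀ (i0 : Fin n) (t : ℝ),
      ∑ k, (1 + if k = i0 then t else 0) * d k = (∑ k, d k) + t * d i0 := by
    intro i0 t
    have h0 : ∀ k, (1 + if k = i0 then t else 0) * d k
        = d k + (if k = i0 then t * d i0 else 0) := by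
      intro k; by_cases hk : k = i0 <;> simp [hk] <;> ring
    rw [Finset.sum_congr rfl (fun k _ => h0 k), Finset.sum_add_distrib,
      Finset.sum_ite_eq' Finset.univ i0 (fun _ => t * d i0)]
    simp
  rcases le_or_gt (∑ k, d k) 0 with h | h
  · have ht : 0 ≤ (-(∑ k, d k)) / d i := div_nonneg (by linarith) hi.le
    refine ⟨fun k => 1 + if k = i then (-(∑ k, d k)) / d i else 0, fun k => ?_, ?_⟩
    · by_cases hk : k = i <;> simp [hk] <;> linarith
    · rw [key i]
      field_simp
      ring
  · have ht : 0 ≤ (∑ k, d k) / (-(d j)) := div_nonneg h.le (by linarith)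
    refine ⟨fun k => 1 + if k = j then (∑ k, d k) / (-(d j)) else 0, fun k => ?_, ?_⟩
    · by_cases hk : k = j <;> simp [hk] <;> linarith
    · rw [key j]
      have hdj : d j ≠ 0 := ne_of_lt hj
      rw [div_neg, neg_mul, div_mul_cancel₀ _ hdj]
      ring

-- the projection/forcing lemma
lemma force {L : (Fin n → ℝ) →ₗ[ℝ] ℝ} {c : ℝ} {v : Fin n → ℝ}
    (hEq : (fun x => x + ((c - L x) / L v) • v) '' KK n = KK n ∩ {x | L x = c})
    {w : Fin n → ℝ} (hw : w ∈ KK n) (φ : (Fin n → ℝ) →ₗ[ℝ] ℝ) (hφv : φ v = 0)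
    (hmax : ∀ x ∈ KK n, x ≠ w → φ x < φ w) : L w = c := by
  have hy : w + ((c - L w) / L v) • v ∈ KK n ∩ {x | L x = c} := by
    rw [← hEq]; exact ⟨w, hw, rfl⟩
  by_cases h : w + ((c - L w) / L v) • v = w
  · have h2 := hy.2
    simp only [Set.mem_setOf_eq] at h2
    rwa [h] at h2
  · exfalso
    have h1 := hmax _ hy.1 h
    have h2 : φ (w + ((c - L w) / L v) • v) = φ w := by
      rw [map_add, map_smul, hφv]; simp
    rw [h2] at h1; exact lt_irrefl _ h1

lemma force_vertex {L : (Fin n → ℝ) →ₗ[ℝ] ℝ} {c : ℝ} {v : Fin n → ℝ}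
    (hEq : (fun x => x + ((c - L x) / L v) • v) '' KK n = KK n ∩ {x | L x = c})
    {w : Fin n → ℝ} (hw : w ∈ KK n)
    (R : Fin n → Fin n → ℝ) (b : Fin n → ℝ)
    (hact : ∀ k, lf (R k) w = b k)
    (hfeas : ∀ x ∈ KK n, ∀ k, lf (R k) x ≤ b k)
    (huniq : ∀ x : Fin n → ℝ, (∀ k, lf (R k) x = b k) → x = w)
    {i j : Fin n} (hi : 0 < lf (R i) v) (hj : lf (R j) v < 0) : L w = c := by
  obtain ⟨lam, hlam, hbal⟩ := balance (fun k => lf (R k) v) hi hj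
  have hφx : ∀ x, (∑ k, lam k • lf (R k) : (Fin n → ℝ) →ₗ[ℝ] ℝ) x
      = ∑ k, lam k * lf (R k) x := by
    intro x
    rw [LinearMap.sum_apply]
    exact Finset.sum_congr rfl fun k _ => rfl
  apply force hEq hw (∑ k, lam k • lf (R k)) (by rw [hφx]; exact hbal)
  intro x hx hxw
  rw [hφx, hφx]
  have hex : ∃ k, lf (R k) x < b k := by
    by_contra hcon
    push_neg at hcon
    exact hxw (huniq x fun k => le_antisymm (hfeas x hx k) (hcon k))
  obtain ⟨k0, hk0⟩ := hex
  apply Finset.sum_lt_sum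
  · intro k _
    exact mul_le_mul_of_nonneg_left (le_of_le_of_eq (hfeas x hx k) (hact k).symm) (hlam k).le
  · refine ⟨k0, Finset.mem_univ k0, ?_⟩
    rw [hact k0]
    exact mul_lt_mul_of_pos_left hk0 (hlam k0)

-- row systems
noncomputable def rowsQ (c j : Fin n) : Fin n → Fin n → ℝ :=
  fun k => if k = c then uu c else if k = j then ones n else negE k
noncomputable def bQ (c j : Fin n) : Fin n → ℝ :=
  fun k => if k = c then 1 - tt else if k = j then 1 else 0
noncomputable def rowsC (c : Fin n) : Fin n → Fin n → ℝ :=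
  fun k => if k = c then uu c else negE k
noncomputable def bC (c : Fin n) : Fin n → ℝ := fun k => if k = c then 1 - tt else 0
def rows0 (n : ℕ) : Fin n → Fin n → ℝ := fun k => negE k

lemma rowsQ_c (c j : Fin n) : rowsQ c j c = uu c := if_pos rfl
lemma rowsQ_j {c j : Fin n} (h : c ≠ j) : rowsQ c j j = ones n := by
  unfold rowsQ; rw [if_neg (Ne.symm h), if_pos rfl]
lemma rowsQ_k {c j k : Fin n} (h1 : k ≠ c) (h2 : k ≠ j) : rowsQ c j k = negE k := by
  unfold rowsQ; rw [if_neg h1, if_neg h2]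
lemma bQ_c (c j : Fin n) : bQ c j c = 1 - tt := if_pos rfl
lemma bQ_j {c j : Fin n} (h : c ≠ j) : bQ c j j = 1 := by
  unfold bQ; rw [if_neg (Ne.symm h), if_pos rfl]
lemma bQ_k {c j k : Fin n} (h1 : k ≠ c) (h2 : k ≠ j) : bQ c j k = 0 := by
  unfold bQ; rw [if_neg h1, if_neg h2]
lemma rowsC_c (c : Fin n) : rowsC c c = uu c := if_pos rfl
lemma rowsC_k {c k : Fin n} (h1 : k ≠ c) : rowsC c k = negE k := if_neg h1
lemma bC_c (c : Fin n) : bC c c = 1 - tt := if_pos rfl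
lemma bC_k {c k : Fin n} (h1 : k ≠ c) : bC c k = 0 := if_neg h1

lemma feasQ (c j : Fin n) : ∀ x ∈ KK n, ∀ k, lf (rowsQ c j k) x ≤ bQ c j k := by
  intro x hx k
  by_cases h1 : k = c
  · subst h1; rw [rowsQ_c, bQ_c]; exact hx.2.2 k
  · by_cases h2 : k = j
    · subst h2
      rw [rowsQ_j (fun h => h1 h.symm), bQ_j (fun h => h1 h.symm), lf_ones]
      exact hx.2.1
    · rw [rowsQ_k h1 h2, bQ_k h1 h2, lf_negE]; linarith [hx.1 k]

lemma feasC (c : Fin n) : ∀ x ∈ KK n, ∀ k, lf (rowsC c k) x ≤ bC c k := by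
  intro x hx k
  by_cases h1 : k = c
  · subst h1; rw [rowsC_c, bC_c]; exact hx.2.2 k
  · rw [rowsC_k h1, bC_k h1, lf_negE]; linarith [hx.1 k]

lemma feas0 : ∀ x ∈ KK n, ∀ k, lf (rows0 n k) x ≤ (0 : Fin n → ℝ) k := by
  intro x hx k
  unfold rows0
  simp only [lf_negE, Pi.zero_apply]
  linarith [hx.1 k]

lemma actQ {c j : Fin n} (hcj : c ≠ j) : ∀ k, lf (rowsQ c j k) (vq c j) = bQ c j k := by
  intro k
  by_cases h1 : k = c
  · subst h1; rw [rowsQ_c, bQ_c]; exact lf_uu_vq_self hcj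
  · by_cases h2 : k = j
    · subst h2
      rw [rowsQ_j (fun h => h1 h.symm), bQ_j (fun h => h1 h.symm), lf_ones]
      exact sum_vq hcj
    · rw [rowsQ_k h1 h2, bQ_k h1 h2, lf_negE]
      unfold vq; rw [if_neg h1, if_neg h2]; ring

lemma actC (c : Fin n) : ∀ k, lf (rowsC c k) (vc c) = bC c k := by
  intro k
  by_cases h1 : k = c
  · subst h1; rw [rowsC_c, bC_c, lf_uu_vc, uu_self, one_mul]
  · rw [rowsC_k h1, bC_k h1, lf_negE]
    unfold vc; rw [if_neg h1]; ring

lemma act0 : ∀ k, lf (rows0 n k) (0 : Fin n → ℝ) = (0 : Fin n → ℝ) k := by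
  intro k; simp [rows0]

lemma uniq0 : ∀ x : Fin n → ℝ, (∀ k, lf (rows0 n k) x = (0 : Fin n → ℝ) k) → x = 0 := by
  intro x hx
  funext k
  have h := hx k
  simp only [rows0, lf_negE, Pi.zero_apply, neg_eq_zero] at h
  simpa using h

lemma uniqC (c : Fin n) : ∀ x : Fin n → ℝ, (∀ k, lf (rowsC c k) x = bC c k) → x = vc c := by
  intro x hx
  have hz : ∀ k, k ≠ c → x k = 0 := by
    intro k hk
    have h := hx k
    rw [rowsC_k hk, bC_k hk, lf_negE, neg_eq_zero] at h
    exact h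
  have hc := hx c
  rw [rowsC_c, bC_c, lf_apply,
    sum_one (fun k => uu c k * x k) c (fun k hk => by simp only [hz k hk, mul_zero]),
    uu_self, one_mul] at hc
  funext k
  unfold vc
  by_cases hk : k = c
  · rw [if_pos hk, hk, hc]
  · rw [if_neg hk, hz k hk]

lemma uniqQ {c j : Fin n} (hcj : c ≠ j) :
    ∀ x : Fin n → ℝ, (∀ k, lf (rowsQ c j k) x = bQ c j k) → x = vq c j := by
  intro x hx
  have hz : ∀ k, k ≠ c → k ≠ j → x k = 0 := by
    intro k hk1 hk2
    have h := hx k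
    rw [rowsQ_k hk1 hk2, bQ_k hk1 hk2, lf_negE, neg_eq_zero] at h
    exact h
  have hsum := hx j
  rw [rowsQ_j hcj, bQ_j hcj, lf_ones, sum_two x hcj hz] at hsum
  have hcut := hx c
  rw [rowsQ_c, bQ_c, lf_apply,
    sum_two (fun k => uu c k * x k) hcj (fun k h1 h2 => by simp only [hz k h1 h2, mul_zero]),
    uu_self, uu_ne (Ne.symm hcj), one_mul] at hcut
  have hxj : x j = ss j := by
    have hpos := one_add_eb_pos j
    have h2 : x j * (1 + ee n * bb j) = tt := by nlinarith
    have h3 := ss_mul j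
    exact mul_right_cancel₀ (ne_of_gt hpos) (h2.trans h3.symm)
  have hxc : x c = 1 - ss j := by nlinarith
  funext k
  unfold vq
  by_cases hk : k = c
  · rw [if_pos hk, hk, hxc]
  · by_cases hk2 : k = j
    · rw [if_neg hk, if_pos hk2, hk2, hxj]
    · rw [if_neg hk, if_neg hk2, hz k hk hk2]
-- specialized force lemmas
lemma forceQ {L : (Fin n → ℝ) →ₗ[ℝ] ℝ} {c : ℝ} {v : Fin n → ℝ}
    (hEq : (fun x => x + ((c - L x) / L v) • v) '' KK n = KK n ∩ {x | L x = c})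
    {cc jj : Fin n} (hcj : cc ≠ jj)
    {i j : Fin n} (hi : 0 < lf (rowsQ cc jj i) v) (hj : lf (rowsQ cc jj j) v < 0) :
    L (vq cc jj) = c :=
  force_vertex hEq (vq_mem hcj) _ _ (actQ hcj) (feasQ cc jj) (uniqQ hcj) hi hj

lemma forceC {L : (Fin n → ℝ) →ₗ[ℝ] ℝ} {c : ℝ} {v : Fin n → ℝ}
    (hEq : (fun x => x + ((c - L x) / L v) • v) '' KK n = KK n ∩ {x | L x = c})
    (cc : Fin n)
    {i j : Fin n} (hi : 0 < lf (rowsC cc i) v) (hj : lf (rowsC cc j) v < 0) :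
    L (vc cc) = c :=
  force_vertex hEq (vc_mem cc) _ _ (actC cc) (feasC cc) (uniqC cc) hi hj

lemma force0 {L : (Fin n → ℝ) →ₗ[ℝ] ℝ} {c : ℝ} {v : Fin n → ℝ}
    (hEq : (fun x => x + ((c - L x) / L v) • v) '' KK n = KK n ∩ {x | L x = c})
    {i j : Fin n} (hi : 0 < lf (rows0 n i) v) (hj : lf (rows0 n j) v < 0) :
    c = 0 := by
  have h := force_vertex hEq zero_mem _ _ act0 feas0 uniq0 hi hj
  rw [map_zero] at h
  exact h.symm

-- decompositions
lemma vq_decomp {c j : Fin n} (hcj : c ≠ j) : vq c j = (1 - ss j) • Ee c + ss j • Ee j := by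
  funext m
  simp only [Pi.add_apply, Pi.smul_apply, smul_eq_mul, Ee, vq]
  by_cases h1 : m = c
  · subst h1
    rw [if_pos rfl, if_pos rfl, if_neg (fun h : j = m => hcj h.symm)]
    ring
  · rw [if_neg h1, if_neg (fun h : c = m => h1 h.symm)]
    by_cases h2 : m = j
    · subst h2
      rw [if_pos rfl, if_pos rfl]
      ring
    · rw [if_neg h2, if_neg (fun h : j = m => h2 h.symm)]
      ring

lemma L_vq (L : (Fin n → ℝ) →ₗ[ℝ] ℝ) {c j : Fin n} (hcj : c ≠ j) :
    L (vq c j) = (1 - ss j) * L (Ee c) + ss j * L (Ee j) := by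
  rw [vq_decomp hcj, map_add, map_smul, map_smul, smul_eq_mul, smul_eq_mul]

lemma vc_decomp (c : Fin n) : vc c = (1 - tt) • Ee c := by
  funext m
  simp only [Pi.smul_apply, smul_eq_mul, Ee, vc]
  by_cases h1 : m = c
  · subst h1; rw [if_pos rfl, if_pos rfl]; ring
  · rw [if_neg h1, if_neg (fun h : c = m => h1 h.symm)]; ring

lemma L_vc (L : (Fin n → ℝ) →ₗ[ℝ] ℝ) (c : Fin n) :
    L (vc c) = (1 - tt) * L (Ee c) := by
  rw [vc_decomp, map_smul, smul_eq_mul]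

lemma L_zero_basis (L : (Fin n → ℝ) →ₗ[ℝ] ℝ) (h : ∀ k, L (Ee k) = 0) : L = 0 := by
  apply LinearMap.ext
  intro x
  conv_lhs => rw [pi_eq_sum_univ x]
  rw [map_sum]
  simp only [map_smul, smul_eq_mul]
  have : ∀ k : Fin n, x k * L (fun j => if k = j then (1:ℝ) else 0) = 0 := by
    intro k
    have hk : (fun j => if k = j then (1:ℝ) else 0) = Ee k := rfl
    rw [hk, h k, mul_zero]
  rw [Finset.sum_congr rfl (fun k _ => this k)]
  simp

-- index picking
lemma two_others (hn : 3 ≤ n) (a : Fin n) : ∃ p₁ p₂ : Fin n, p₁ ≠ a ∧ p₂ ≠ a ∧ p₁ ≠ p₂ := by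
  have hcard : 1 < ({a}ᶜ : Finset (Fin n)).card := by
    rw [Finset.card_compl, Finset.card_singleton, Fintype.card_fin]
    omega
  obtain ⟨p₁, hp₁, p₂, hp₂, h12⟩ := Finset.one_lt_card.mp hcard
  exact ⟨p₁, p₂, by simpa using hp₁, by simpa using hp₂, h12⟩

lemma one_other (hn : 3 ≤ n) (a b : Fin n) : ∃ c₀ : Fin n, c₀ ≠ a ∧ c₀ ≠ b := by
  have hcard : 0 < ({a, b}ᶜ : Finset (Fin n)).card := by
    rw [Finset.card_compl, Fintype.card_fin]
    have : ({a, b} : Finset (Fin n)).card ≤ 2 := Finset.card_insert_le a {b} |>.trans (by simp)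
    omega
  obtain ⟨c₀, hc₀⟩ := Finset.card_pos.mp hcard
  simp only [Finset.mem_compl, Finset.mem_insert, Finset.mem_singleton] at hc₀
  push_neg at hc₀
  exact ⟨c₀, hc₀.1, hc₀.2⟩

-- single/double support vectors
def v1 (a : Fin n) (μ : ℝ) : Fin n → ℝ := fun k => if k = a then μ else 0
def v2 (a b : Fin n) (μ w : ℝ) : Fin n → ℝ :=
  fun k => if k = a then μ else if k = b then w else 0

lemma sum_v1 (a : Fin n) (μ : ℝ) : ∑ k, v1 a μ k = μ := by
  rw [sum_one (v1 a μ) a (fun k hk => if_neg hk)]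
  exact if_pos rfl

lemma sum_v2 {a b : Fin n} (hab : a ≠ b) (μ w : ℝ) : ∑ k, v2 a b μ w k = μ + w := by
  rw [sum_two (v2 a b μ w) hab (fun k h1 h2 => by unfold v2; rw [if_neg h1, if_neg h2])]
  unfold v2
  rw [if_pos rfl, if_neg (Ne.symm hab), if_pos rfl]

lemma lf_uu_v1 (d a : Fin n) (μ : ℝ) : lf (uu d) (v1 a μ) = uu d a * μ := by
  rw [lf_apply, sum_one (fun k => uu d k * v1 a μ k) a
    (fun k hk => by simp only [v1, if_neg hk, mul_zero])]
  simp [v1]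

lemma lf_uu_v2 (d : Fin n) {a b : Fin n} (hab : a ≠ b) (μ w : ℝ) :
    lf (uu d) (v2 a b μ w) = uu d a * μ + uu d b * w := by
  rw [lf_apply, sum_two (fun k => uu d k * v2 a b μ w k) hab
    (fun k h1 h2 => by simp only [v2, if_neg h1, if_neg h2, mul_zero])]
  simp [v2, if_neg (Ne.symm hab)]

-- two-support evaluation of cut functionals
lemma lf_uu_two (d : Fin n) {a b : Fin n} (hab : a ≠ b) {v : Fin n → ℝ}
    (hz : ∀ k, k ≠ a → k ≠ b → v k = 0) :
    lf (uu d) v = uu d a * v a + uu d b * v b := by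
  rw [lf_apply, sum_two (fun k => uu d k * v k) hab
    (fun k h1 h2 => by simp only [hz k h1 h2, mul_zero])]

-- positivity certificate for the cut row at a maximal coordinate
lemma ucert {v : Fin n → ℝ} {cst : Fin n} (hpos : 0 < v cst) (hmax : ∀ k, v k ≤ v cst) :
    0 < lf (uu cst) v := by
  have hsplit : lf (uu cst) v
      = v cst + ∑ k ∈ Finset.univ.erase cst, (-(ee n * bb k)) * v k := by
    rw [lf_apply, ← Finset.add_sum_erase _ _ (Finset.mem_univ cst), uu_self, one_mul]
    congr 1
    refine Finset.sum_congr rfl fun k hk => ?_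
    rw [uu_ne (Finset.ne_of_mem_erase hk)]
  have hterm : ∀ k ∈ Finset.univ.erase cst,
      -(ee n * (3/2) * v cst) ≤ (-(ee n * bb k)) * v k := by
    intro k hk
    have h1 := ee_pos cst
    have h2 := bb_ge k
    have h3 := bb_le k
    rcases le_or_gt (v k) 0 with h | h
    · have hA : 0 ≤ (-(ee n * bb k)) * v k := by
        have h5 : 0 ≤ ee n * bb k := mul_nonneg h1.le (by linarith)
        nlinarith
      have hB : -(ee n * (3/2) * v cst) ≤ 0 := by nlinarith
      linarith
    · have hA : bb k * v k ≤ (3/2) * v cst := by nlinarith [hmax k]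
      nlinarith
  have hsum := Finset.card_nsmul_le_sum _ _ _ hterm
  have hcard : (Finset.univ.erase cst).card = n - 1 := by
    rw [Finset.card_erase_of_mem (Finset.mem_univ cst), Finset.card_univ, Fintype.card_fin]
  rw [hcard] at hsum
  have hn1 : (1:ℕ) ≤ n := cst.pos
  have hcast : ((n - 1 : ℕ) : ℝ) = (n:ℝ) - 1 := by
    rw [Nat.cast_sub hn1, Nat.cast_one]
  rw [nsmul_eq_mul, hcast] at hsum
  have hnpos : (0:ℝ) < n := npos cst
  have hkey : ee n * (3/2) * ((n:ℝ) - 1) < 1 := by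
    unfold ee
    rw [div_mul_eq_mul_div, div_mul_eq_mul_div, div_lt_one (by linarith)]
    nlinarith
  rw [hsplit]
  nlinarith

section Leaves

variable {L : (Fin n → ℝ) →ₗ[ℝ] ℝ} {c : ℝ} {v : Fin n → ℝ}

lemma leafP5 (hL : L ≠ 0)
    (hEq : (fun x => x + ((c - L x) / L v) • v) '' KK n = KK n ∩ {x | L x = c})
    {m₁ m₂ p₁ p₂ : Fin n} (hm12 : m₁ ≠ m₂) (hp12 : p₁ ≠ p₂)
    (hm1 : v m₁ < 0) (hm2 : v m₂ < 0) (hp1 : 0 < v p₁) (hp2 : 0 < v p₂) : False := by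
  have hc : c = 0 := by
    refine force0 hEq (i := m₁) (j := p₁) ?_ ?_
    · show 0 < lf (negE m₁) v
      rw [lf_negE]; linarith
    · show lf (negE p₁) v < 0
      rw [lf_negE]; linarith
  have hax : ∀ cc : Fin n, L (Ee cc) = 0 := by
    intro cc
    obtain ⟨km, hkm, hkmv⟩ : ∃ km, km ≠ cc ∧ v km < 0 := by
      by_cases h : m₁ = cc
      · exact ⟨m₂, fun hh => hm12 (h ▸ hh ▸ rfl), hm2⟩
      · exact ⟨m₁, h, hm1⟩
    obtain ⟨kp, hkp, hkpv⟩ : ∃ kp, kp ≠ cc ∧ 0 < v kp := by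
      by_cases h : p₁ = cc
      · exact ⟨p₂, fun hh => hp12 (h ▸ hh ▸ rfl), hp2⟩
      · exact ⟨p₁, h, hp1⟩
    have hforce : L (vc cc) = c := by
      refine forceC hEq cc (i := km) (j := kp) ?_ ?_
      · rw [rowsC_k hkm, lf_negE]; linarith
      · rw [rowsC_k hkp, lf_negE]; linarith
    rw [L_vc, hc] at hforce
    have htt : (1:ℝ) - tt ≠ 0 := by norm_num [tt]
    exact (mul_eq_zero.mp hforce).resolve_left htt
  exact hL (L_zero_basis L hax)

lemma leafP3 (hn : 3 ≤ n) (hL : L ≠ 0)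
    (hEq : (fun x => x + ((c - L x) / L v) • v) '' KK n = KK n ∩ {x | L x = c})
    {b p₁ p₂ : Fin n}
    (hvb : v b < 0) (hposk : ∀ k, k ≠ b → 0 ≤ v k)
    (hp12 : p₁ ≠ p₂) (hp1 : 0 < v p₁) (hp2 : 0 < v p₂) : False := by
  have hp1b : p₁ ≠ b := fun h => absurd (h ▸ hp1) (not_lt.mpr hvb.le)
  have hp2b : p₂ ≠ b := fun h => absurd (h ▸ hp2) (not_lt.mpr hvb.le)
  have hc : c = 0 := by
    refine force0 hEq (i := b) (j := p₁) ?_ ?_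
    · show 0 < lf (negE b) v
      rw [lf_negE]; linarith
    · show lf (negE p₁) v < 0
      rw [lf_negE]; linarith
  have hax : ∀ cc : Fin n, cc ≠ b → L (Ee cc) = 0 := by
    intro cc hccb
    obtain ⟨kp, hkp, hkpv⟩ : ∃ kp, kp ≠ cc ∧ 0 < v kp := by
      by_cases h : p₁ = cc
      · exact ⟨p₂, fun hh => hp12 (h ▸ hh ▸ rfl), hp2⟩
      · exact ⟨p₁, h, hp1⟩
    have hforce : L (vc cc) = c := by
      refine forceC hEq cc (i := b) (j := kp) ?_ ?_
      · rw [rowsC_k (fun h : b = cc => hccb h.symm), lf_negE]; linarith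
      · rw [rowsC_k hkp, lf_negE]; linarith
    rw [L_vc, hc] at hforce
    have htt : (1:ℝ) - tt ≠ 0 := by norm_num [tt]
    exact (mul_eq_zero.mp hforce).resolve_left htt
  -- the maximal coordinate
  obtain ⟨cst, _, hcst⟩ := Finset.exists_max_image Finset.univ v ⟨p₁, Finset.mem_univ p₁⟩
  have hcstmax : ∀ k, v k ≤ v cst := fun k => hcst k (Finset.mem_univ k)
  have hcstpos : 0 < v cst := lt_of_lt_of_le hp1 (hcstmax p₁)
  have hcstb : cst ≠ b := fun h => absurd (h ▸ hcstpos) (not_lt.mpr hvb.le)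
  obtain ⟨kp, hkpcst, hkpv⟩ : ∃ kp, kp ≠ cst ∧ 0 < v kp := by
    by_cases h : p₁ = cst
    · exact ⟨p₂, fun hh => hp12 (h ▸ hh ▸ rfl), hp2⟩
    · exact ⟨p₁, h, hp1⟩
  have hkpb : kp ≠ b := fun h => absurd (h ▸ hkpv) (not_lt.mpr hvb.le)
  have hforce : L (vq cst b) = c := by
    refine forceQ hEq hcstb (i := cst) (j := kp) ?_ ?_
    · rw [rowsQ_c]; exact ucert hcstpos hcstmax
    · rw [rowsQ_k hkpcst hkpb, lf_negE]; linarith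
  rw [L_vq L hcstb, hax cst hcstb, hc, mul_zero, zero_add] at hforce
  have hsb := ss_pos b
  have htb : L (Ee b) = 0 := by
    rcases mul_eq_zero.mp hforce with h | h
    · exact absurd h (ne_of_gt hsb)
    · exact h
  refine hL (L_zero_basis L fun k => ?_)
  by_cases hk : k = b
  · rw [hk]; exact htb
  · exact hax k hk

lemma leafP4 (hn : 3 ≤ n) (hL : L ≠ 0)
    (hEq : (fun x => x + ((c - L x) / L v) • v) '' KK n = KK n ∩ {x | L x = c})
    {p₁ p₂ : Fin n} (hp12 : p₁ ≠ p₂)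
    (hpos : ∀ k, 0 ≤ v k) (hp1 : 0 < v p₁) (hp2 : 0 < v p₂) : False := by
  have hs : 0 < ∑ k, v k :=
    lt_of_lt_of_le hp1 (Finset.single_le_sum (fun k _ => hpos k) (Finset.mem_univ p₁))
  have hQ : ∀ cc jj kp : Fin n, cc ≠ jj → kp ≠ cc → kp ≠ jj → 0 < v kp →
      L (vq cc jj) = c := by
    intro cc jj kp h1 h2 h3 h4
    refine forceQ hEq h1 (i := jj) (j := kp) ?_ ?_
    · rw [rowsQ_j h1, lf_ones]; exact hs
    · rw [rowsQ_k h2 h3, lf_negE]; linarith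
  obtain ⟨c₀, hc01, hc02⟩ := one_other hn p₁ p₂
  have hss : (0:ℝ) < 1 - ss c₀ := by
    have := ss_le c₀; have := ss_pos c₀; norm_num at *; linarith
  -- t2 = t1
  have R1 : (1 - ss c₀) * L (Ee p₁) + ss c₀ * L (Ee c₀) = c := by
    rw [← L_vq L (Ne.symm hc01)]
    exact hQ p₁ c₀ p₂ (Ne.symm hc01) hp12.symm (Ne.symm hc02) hp2
  have R2 : (1 - ss c₀) * L (Ee p₂) + ss c₀ * L (Ee c₀) = c := by
    rw [← L_vq L (Ne.symm hc02)]
    exact hQ p₂ c₀ p₁ (Ne.symm hc02) hp12 (Ne.symm hc01) hp1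
  have h21 : L (Ee p₂) = L (Ee p₁) := by
    have h0 : (1 - ss c₀) * L (Ee p₂) = (1 - ss c₀) * L (Ee p₁) := by linarith
    exact mul_left_cancel₀ (ne_of_gt hss) h0
  -- generic coordinates
  have hgen : ∀ k, k ≠ p₁ → k ≠ p₂ → L (Ee k) = L (Ee p₁) := by
    intro k hk1 hk2
    have S1 : (1 - ss p₁) * L (Ee k) + ss p₁ * L (Ee p₁) = c := by
      rw [← L_vq L hk1]
      exact hQ k p₁ p₂ hk1 (Ne.symm hk2) hp12.symm hp2
    have S2 : (1 - ss p₂) * L (Ee k) + ss p₂ * L (Ee p₂) = c := by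
      rw [← L_vq L hk2]
      exact hQ k p₂ p₁ hk2 (Ne.symm hk1) hp12 hp1
    have hssne : ss p₁ ≠ ss p₂ := fun h => hp12 (ss_inj h)
    have h0 : (ss p₂ - ss p₁) * L (Ee k) = (ss p₂ - ss p₁) * L (Ee p₁) := by
      rw [h21] at S2; ring_nf; ring_nf at S1 S2; linarith
    exact mul_left_cancel₀ (sub_ne_zero.mpr (Ne.symm hssne)) h0
  have hall : ∀ k, L (Ee k) = L (Ee p₁) := by
    intro k
    by_cases hk1 : k = p₁
    · rw [hk1]
    · by_cases hk2 : k = p₂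
      · rw [hk2]; exact h21
      · exact hgen k hk1 hk2
  have hcv : c = L (Ee p₁) := by
    rw [← R1, hall c₀]; ring
  -- the maximal coordinate kills everything
  obtain ⟨cst, _, hcst⟩ := Finset.exists_max_image Finset.univ v ⟨p₁, Finset.mem_univ p₁⟩
  have hcstmax : ∀ k, v k ≤ v cst := fun k => hcst k (Finset.mem_univ k)
  have hcstpos : 0 < v cst := lt_of_lt_of_le hp1 (hcstmax p₁)
  obtain ⟨kp, hkpcst, hkpv⟩ : ∃ kp, kp ≠ cst ∧ 0 < v kp := by
    by_cases h : p₁ = cst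
    · exact ⟨p₂, fun hh => hp12 (h ▸ hh ▸ rfl), hp2⟩
    · exact ⟨p₁, h, hp1⟩
  have hforce : L (vc cst) = c := by
    refine forceC hEq cst (i := cst) (j := kp) ?_ ?_
    · rw [rowsC_c]; exact ucert hcstpos hcstmax
    · rw [rowsC_k hkpcst, lf_negE]; linarith
  rw [L_vc, hall cst, ← hcv] at hforce
  have hc0 : c = 0 := by
    have htt := tt_pos
    nlinarith
  refine hL (L_zero_basis L fun k => ?_)
  rw [hall k, ← hcv, hc0]

end Leaves

section Leaves2

variable {L : (Fin n → ℝ) →ₗ[ℝ] ℝ} {c : ℝ} {v : Fin n → ℝ}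

lemma leafP1 (hn : 3 ≤ n) (hL : L ≠ 0)
    (hEq : (fun x => x + ((c - L x) / L v) • v) '' KK n = KK n ∩ {x | L x = c})
    {a : Fin n} (hμ : v a ≠ 0) (hz : ∀ k, k ≠ a → v k = 0) : False := by
  have hsum : ∑ k, v k = v a := sum_one v a hz
  have heb := eb_pos (n := n) a
  have hQ : ∀ cc jj : Fin n, cc ≠ a → cc ≠ jj → L (vq cc jj) = c := by
    intro cc jj h1 h2
    have hiv : lf (rowsQ cc jj jj) v = v a := by rw [rowsQ_j h2, lf_ones, hsum]
    have hjv : lf (rowsQ cc jj cc) v = -(ee n * bb a) * v a := by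
      rw [rowsQ_c, lf_uu_two cc (Ne.symm h1) (fun k hk _ => hz k hk), hz cc h1, uu_ne (Ne.symm h1)]
      ring
    rcases hμ.lt_or_gt with hneg | hpos
    · refine forceQ hEq h2 (i := cc) (j := jj) ?_ ?_
      · rw [hjv]; nlinarith
      · rw [hiv]; exact hneg
    · refine forceQ hEq h2 (i := jj) (j := cc) ?_ ?_
      · rw [hiv]; exact hpos
      · rw [hjv]; nlinarith
  obtain ⟨p₁, p₂, hp1a, hp2a, hp12⟩ := two_others hn a
  have hss2 : (0:ℝ) < 1 - ss p₂ - ss p₁ := by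
    have := ss_le p₁; have := ss_le p₂; have := ss_pos p₁; have := ss_pos p₂
    norm_num at *; linarith
  have R1 : (1 - ss p₂) * L (Ee p₁) + ss p₂ * L (Ee p₂) = c := by
    rw [← L_vq L hp12]; exact hQ p₁ p₂ hp1a hp12
  have R2 : (1 - ss p₁) * L (Ee p₂) + ss p₁ * L (Ee p₁) = c := by
    rw [← L_vq L hp12.symm]; exact hQ p₂ p₁ hp2a hp12.symm
  have h21 : L (Ee p₂) = L (Ee p₁) := by
    have h0 : (1 - ss p₂ - ss p₁) * L (Ee p₂) = (1 - ss p₂ - ss p₁) * L (Ee p₁) := by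
      ring_nf; ring_nf at R1 R2; linarith
    exact mul_left_cancel₀ (ne_of_gt hss2) h0
  have hcv : c = L (Ee p₁) := by rw [← R1, h21]; ring
  have hall : ∀ k, L (Ee k) = L (Ee p₁) := by
    intro k
    by_cases hk1 : k = p₁
    · rw [hk1]
    · by_cases hk2 : k = p₂
      · rw [hk2]; exact h21
      · by_cases hka : k = a
        · -- R(p₁, a): (1 - ss a) t1 + ss a * ta = c = t1
          subst hka
          have R3 : (1 - ss k) * L (Ee p₁) + ss k * L (Ee k) = c := by
            rw [← L_vq L (fun h : p₁ = k => hp1a h)]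
            exact hQ p₁ k hp1a (fun h : p₁ = k => hp1a h)
          have hsk := ss_pos k
          have h0 : ss k * L (Ee k) = ss k * L (Ee p₁) := by
            rw [hcv] at R3; linarith
          exact mul_left_cancel₀ (ne_of_gt hsk) h0
        · -- R(k, p₁): (1-s₁) tk + s₁ t1 = c = t1
          have R3 : (1 - ss p₁) * L (Ee k) + ss p₁ * L (Ee p₁) = c := by
            rw [← L_vq L (fun h : k = p₁ => hk1 h)]
            exact hQ k p₁ hka (fun h : k = p₁ => hk1 h)
          have hs1 : (0:ℝ) < 1 - ss p₁ := by
            have := ss_le p₁; norm_num at *; linarith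
          have h0 : (1 - ss p₁) * L (Ee k) = (1 - ss p₁) * L (Ee p₁) := by
            rw [hcv] at R3; linarith
          exact mul_left_cancel₀ (ne_of_gt hs1) h0
  set t := L (Ee p₁) with hts
  by_cases ht : t = 0
  · refine hL (L_zero_basis L fun k => ?_)
    rw [hall k]; exact ht
  · -- kill: the image of 0 is Ee a ∉ K
    have hva : v = v a • Ee a := by
      funext m
      simp only [Pi.smul_apply, smul_eq_mul, Ee]
      by_cases h : m = a
      · subst h; rw [if_pos rfl, mul_one]
      · rw [if_neg (fun hh : a = m => h hh.symm), mul_zero, hz m h]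
    have hLv : L v = v a * t := by
      conv_lhs => rw [hva]
      rw [map_smul, smul_eq_mul, hall a]
    have him : (0:Fin n → ℝ) + ((c - L 0) / L v) • v ∈ KK n ∩ {x | L x = c} := by
      rw [← hEq]; exact ⟨0, zero_mem, rfl⟩
    have hπ : (0:Fin n → ℝ) + ((c - L 0) / L v) • v = Ee a := by
      rw [map_zero, sub_zero, hLv, hcv]
      funext m
      simp only [Pi.add_apply, Pi.zero_apply, Pi.smul_apply, smul_eq_mul, zero_add, Ee]
      by_cases h : m = a
      · subst h; rw [if_pos rfl]
        field_simp
      · rw [if_neg (fun hh : a = m => h hh.symm), hz m h, mul_zero]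
    rw [hπ] at him
    exact Ee_not_mem a him.1

lemma leafP2neg (hn : 3 ≤ n) (hL : L ≠ 0)
    (hEq : (fun x => x + ((c - L x) / L v) • v) '' KK n = KK n ∩ {x | L x = c})
    {a b : Fin n} (hab : a ≠ b)
    (hva : 0 < v a) (hvb : v b < 0) (hz : ∀ k, k ≠ a → k ≠ b → v k = 0)
    (hs : v a + v b < 0) : False := by
  have hsum : ∑ k, v k = v a + v b := sum_two v hab hz
  have hc : c = 0 := by
    refine force0 hEq (i := b) (j := a) ?_ ?_
    · show 0 < lf (negE b) v
      rw [lf_negE]; linarith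
    · show lf (negE a) v < 0
      rw [lf_negE]; linarith
  have hax : ∀ cc : Fin n, cc ≠ a → cc ≠ b → L (Ee cc) = 0 := by
    intro cc h1 h2
    have hforce : L (vc cc) = c := by
      refine forceC hEq cc (i := b) (j := a) ?_ ?_
      · rw [rowsC_k (fun h : b = cc => h2 h.symm), lf_negE]; linarith
      · rw [rowsC_k (fun h : a = cc => h1 h.symm), lf_negE]; linarith
    rw [L_vc, hc] at hforce
    have htt : (1:ℝ) - tt ≠ 0 := by norm_num [tt]
    exact (mul_eq_zero.mp hforce).resolve_left htt
  -- cluster a forced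
  have hua : 0 < lf (uu a) v := by
    rw [lf_uu_two a hab hz, uu_self, uu_ne (Ne.symm hab), one_mul]
    have := eb_pos (n := n) b
    nlinarith
  have hQa : ∀ jj : Fin n, a ≠ jj → L (vq a jj) = c := by
    intro jj hajj
    refine forceQ hEq hajj (i := a) (j := jj) ?_ ?_
    · rw [rowsQ_c]; exact hua
    · rw [rowsQ_j hajj, lf_ones, hsum]; linarith
  obtain ⟨c₀, hc0a, hc0b⟩ := one_other hn a b
  have hta : L (Ee a) = 0 := by
    have R := hQa c₀ (fun h : a = c₀ => hc0a h.symm)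
    rw [L_vq L (fun h : a = c₀ => hc0a h.symm), hax c₀ hc0a hc0b, hc, mul_zero, add_zero] at R
    have hs1 : (0:ℝ) < 1 - ss c₀ := by
      have := ss_le c₀; norm_num at *; linarith
    rcases mul_eq_zero.mp R with h | h
    · exact absurd h (ne_of_gt hs1)
    · exact h
  have htb : L (Ee b) = 0 := by
    have R := hQa b hab
    rw [L_vq L hab, hta, hc, mul_zero, zero_add] at R
    rcases mul_eq_zero.mp R with h | h
    · exact absurd h (ne_of_gt (ss_pos b))
    · exact h
  refine hL (L_zero_basis L fun k => ?_)
  by_cases hk1 : k = a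
  · rw [hk1]; exact hta
  · by_cases hk2 : k = b
    · rw [hk2]; exact htb
    · exact hax k hk1 hk2

lemma leafP2zero (hn : 3 ≤ n) (hL : L ≠ 0)
    (hEq : (fun x => x + ((c - L x) / L v) • v) '' KK n = KK n ∩ {x | L x = c})
    {a b : Fin n} (hab : a ≠ b)
    (hva : 0 < v a) (hvb : v b < 0) (hz : ∀ k, k ≠ a → k ≠ b → v k = 0)
    (hs : v a + v b = 0) (hbb : bb b < bb a) : False := by
  have hc : c = 0 := by
    refine force0 hEq (i := b) (j := a) ?_ ?_
    · show 0 < lf (negE b) v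
      rw [lf_negE]; linarith
    · show lf (negE a) v < 0
      rw [lf_negE]; linarith
  have hax : ∀ cc : Fin n, cc ≠ a → cc ≠ b → L (Ee cc) = 0 := by
    intro cc h1 h2
    have hforce : L (vc cc) = c := by
      refine forceC hEq cc (i := b) (j := a) ?_ ?_
      · rw [rowsC_k (fun h : b = cc => h2 h.symm), lf_negE]; linarith
      · rw [rowsC_k (fun h : a = cc => h1 h.symm), lf_negE]; linarith
    rw [L_vc, hc] at hforce
    have htt : (1:ℝ) - tt ≠ 0 := by norm_num [tt]
    exact (mul_eq_zero.mp hforce).resolve_left htt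
  obtain ⟨c₀, hc0a, hc0b⟩ := one_other hn a b
  -- vq c₀ a forced : gives t_a = 0
  have hucc : lf (uu c₀) v < 0 := by
    rw [lf_uu_two c₀ hab hz, uu_ne (Ne.symm hc0a), uu_ne (Ne.symm hc0b)]
    have := ee_pos (n := n) a
    have hvb' : v b = -v a := by linarith
    rw [hvb']
    have hba : 0 < bb a - bb b := by linarith
    have h2 : -(ee n * bb a) * v a + -(ee n * bb b) * -v a
        = -(ee n * (bb a - bb b) * v a) := by ring
    rw [h2]
    have : 0 < ee n * (bb a - bb b) * v a := by positivity
    linarith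
  have hta : L (Ee a) = 0 := by
    have hc0a' : c₀ ≠ a := hc0a
    have R : L (vq c₀ a) = c := by
      refine forceQ hEq hc0a (i := b) (j := c₀) ?_ ?_
      · rw [rowsQ_k (fun h : b = c₀ => hc0b h.symm) (fun h : b = a => hab h.symm), lf_negE]
        linarith
      · rw [rowsQ_c]; exact hucc
    rw [L_vq L hc0a, hax c₀ hc0a hc0b, hc, mul_zero, zero_add] at R
    rcases mul_eq_zero.mp R with h | h
    · exact absurd h (ne_of_gt (ss_pos a))
    · exact h
  by_cases htb : L (Ee b) = 0
  · refine hL (L_zero_basis L fun k => ?_)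
    by_cases hk1 : k = a
    · rw [hk1]; exact hta
    · by_cases hk2 : k = b
      · rw [hk2]; exact htb
      · exact hax k hk1 hk2
  · -- kill : image of vq b a is Ee a ∉ K
    have hLva : L v = v b * L (Ee b) := by
      have hv2 : v = v a • Ee a + v b • Ee b := by
        funext m
        simp only [Pi.add_apply, Pi.smul_apply, smul_eq_mul, Ee]
        by_cases h1 : m = a
        · subst h1
          rw [if_pos rfl, if_neg (fun h : b = m => hab h.symm), mul_one, mul_zero, add_zero]
        · by_cases h2 : m = b
          · subst h2
            rw [if_neg (fun h : a = m => h1 h.symm), if_pos rfl, mul_zero, mul_one, zero_add]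
          · rw [if_neg (fun h : a = m => h1 h.symm), if_neg (fun h : b = m => h2 h.symm),
              mul_zero, mul_zero, add_zero, hz m h1 h2]
      conv_lhs => rw [hv2]
      rw [map_add, map_smul, map_smul, smul_eq_mul, smul_eq_mul, hta, mul_zero, zero_add]
    have hLx : L (vq b a) = (1 - ss a) * L (Ee b) := by
      rw [L_vq L (Ne.symm hab), hta, mul_zero, add_zero]
    have him : vq b a + ((c - L (vq b a)) / L v) • v ∈ KK n ∩ {x | L x = c} := by
      rw [← hEq]; exact ⟨vq b a, vq_mem (Ne.symm hab), rfl⟩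
    have hπ : vq b a + ((c - L (vq b a)) / L v) • v = Ee a := by
      rw [hc, hLx, hLva, zero_sub]
      have hcoef : -((1 - ss a) * L (Ee b)) / (v b * L (Ee b)) = -(1 - ss a) / v b := by
        have hvbne : v b ≠ 0 := ne_of_lt hvb
        field_simp
      rw [hcoef]
      funext m
      simp only [Pi.add_apply, Pi.smul_apply, smul_eq_mul, Ee, vq]
      have hvbne : v b ≠ 0 := ne_of_lt hvb
      by_cases h1 : m = b
      · subst h1
        rw [if_pos rfl, if_neg (fun h : a = m => hab h)]
        rw [div_mul_cancel₀ _ hvbne]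
        ring
      · by_cases h2 : m = a
        · subst h2
          rw [if_neg (fun h : m = b => h1 h), if_pos rfl, if_pos rfl]
          have hvb' : v m = -v b := by linarith
          rw [hvb']
          rw [mul_neg, div_mul_cancel₀ _ hvbne]
          ring
        · rw [if_neg h1, if_neg h2, if_neg (fun h : a = m => h2 h.symm), hz m h2 h1, mul_zero,
            add_zero]
    rw [hπ] at him
    exact Ee_not_mem a him.1

end Leaves2

lemma main (hn : 3 ≤ n) (v : Fin n → ℝ) (L : (Fin n → ℝ) →ₗ[ℝ] ℝ) (c : ℝ)
    (hv : v ≠ 0) (hL : L ≠ 0) (hLv : L v ≠ 0)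
    (hEq : (fun x => x + ((c - L x) / L v) • v) '' KK n = KK n ∩ {x | L x = c}) : False := by
  have hEq' : (fun x => x + ((c - L x) / L (-v)) • (-v)) '' KK n = KK n ∩ {x | L x = c} := by
    have hfun : (fun x => x + ((c - L x) / L (-v)) • (-v))
        = (fun x : Fin n → ℝ => x + ((c - L x) / L v) • v) := by
      funext x
      rw [map_neg, div_neg, neg_smul, smul_neg, neg_neg]
    rw [hfun]; exact hEq
  by_cases hP : ∃ k, 0 < v k
  · obtain ⟨a, ha⟩ := hP
    by_cases hN : ∃ k, v k < 0
    · obtain ⟨b, hb⟩ := hN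
      have hab : a ≠ b := by intro h; rw [h] at ha; linarith
      by_cases hP2 : ∃ k, k ≠ a ∧ 0 < v k
      · obtain ⟨p2, hp2a, hp2⟩ := hP2
        by_cases hN2 : ∃ k, k ≠ b ∧ v k < 0
        · obtain ⟨m2, hm2b, hm2⟩ := hN2
          exact leafP5 hL hEq (Ne.symm hm2b) (Ne.symm hp2a) hb hm2 ha hp2
        · push_neg at hN2
          exact leafP3 hn hL hEq hb (fun k hk => hN2 k hk)
            (Ne.symm hp2a) ha hp2
      · push_neg at hP2
        by_cases hN2 : ∃ k, k ≠ b ∧ v k < 0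
        · obtain ⟨m2, hm2b, hm2⟩ := hN2
          refine leafP3 hn hL hEq' (b := a) (p₁ := b) (p₂ := m2) ?_ ?_ ?_ ?_ ?_
          · show (-v) a < 0
            simp only [Pi.neg_apply]; linarith
          · intro k hk
            show 0 ≤ (-v) k
            simp only [Pi.neg_apply, neg_nonneg]
            exact hP2 k hk
          · exact Ne.symm hm2b
          · show 0 < (-v) b
            simp only [Pi.neg_apply]; linarith
          · show 0 < (-v) m2
            simp only [Pi.neg_apply]; linarith
        · push_neg at hN2
          have hz : ∀ k, k ≠ a → k ≠ b → v k = 0 := fun k h1 h2 =>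
            le_antisymm (hP2 k h1) (hN2 k h2)
          rcases lt_trichotomy (v a + v b) 0 with hs | hs | hs
          · exact leafP2neg hn hL hEq hab ha hb hz hs
          · rcases lt_trichotomy (bb b) (bb a) with hbb | hbb | hbb
            · exact leafP2zero hn hL hEq hab ha hb hz hs hbb
            · exact absurd (bb_inj hbb) (Ne.symm hab)
            · refine leafP2zero hn hL hEq' (a := b) (b := a) (Ne.symm hab) ?_ ?_ ?_ ?_ hbb
              · show 0 < (-v) b
                simp only [Pi.neg_apply]; linarith
              · show (-v) a < 0
                simp only [Pi.neg_apply]; linarith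
              · intro k h1 h2
                show (-v) k = 0
                simp only [Pi.neg_apply, neg_eq_zero]
                exact hz k h2 h1
              · show (-v) b + (-v) a = 0
                simp only [Pi.neg_apply]; linarith
          · refine leafP2neg hn hL hEq' (a := b) (b := a) (Ne.symm hab) ?_ ?_ ?_ ?_
            · show 0 < (-v) b
              simp only [Pi.neg_apply]; linarith
            · show (-v) a < 0
              simp only [Pi.neg_apply]; linarith
            · intro k h1 h2
              show (-v) k = 0
              simp only [Pi.neg_apply, neg_eq_zero]
              exact hz k h2 h1
            · show (-v) b + (-v) a < 0
              simp only [Pi.neg_apply]; linarith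
    · push_neg at hN
      by_cases hP2 : ∃ k, k ≠ a ∧ 0 < v k
      · obtain ⟨p2, hp2a, hp2⟩ := hP2
        exact leafP4 hn hL hEq (Ne.symm hp2a) hN ha hp2
      · push_neg at hP2
        have hz : ∀ k, k ≠ a → v k = 0 := fun k hk =>
          le_antisymm (hP2 k hk) (hN k)
        exact leafP1 hn hL hEq (a := a) (ne_of_gt ha) hz
  · push_neg at hP
    by_cases hN : ∃ k, v k < 0
    · obtain ⟨b, hb⟩ := hN
      by_cases hN2 : ∃ k, k ≠ b ∧ v k < 0
      · obtain ⟨m2, hm2b, hm2⟩ := hN2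
        refine leafP4 hn hL hEq' (p₁ := b) (p₂ := m2) (Ne.symm hm2b) ?_ ?_ ?_
        · intro k
          show 0 ≤ (-v) k
          simp only [Pi.neg_apply, neg_nonneg]
          exact hP k
        · show 0 < (-v) b
          simp only [Pi.neg_apply]; linarith
        · show 0 < (-v) m2
          simp only [Pi.neg_apply]; linarith
      · push_neg at hN2
        have hz : ∀ k, k ≠ b → v k = 0 := fun k hk =>
          le_antisymm (hP k) (hN2 k hk)
        exact leafP1 hn hL hEq (a := b) (ne_of_lt hb) hz
    · push_neg at hN
      exact hv (funext fun k => le_antisymm (hP k) (hN k))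

-- structural facts
lemma lf_Ee (w : Fin n → ℝ) (k : Fin n) : lf w (Ee k) = w k := by
  rw [lf_apply, sum_one (fun m => w m * Ee k m) k
    (fun m hm => by simp only [Ee, if_neg (fun h : k = m => hm h.symm), mul_zero])]
  simp [Ee]

lemma lf_ne_zero {w : Fin n → ℝ} (k : Fin n) (hk : w k ≠ 0) : lf w ≠ 0 := by
  intro h
  have := DFunLike.congr_fun h (Ee k)
  rw [lf_Ee] at this
  exact hk (by simpa using this)

noncomputable def rowAll (n : ℕ) : Fin (2*n+1) → (Fin n → ℝ) →ₗ[ℝ] ℝ := fun i =>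
  if h : (i : ℕ) < n then lf (negE ⟨i, h⟩)
  else if h2 : (i : ℕ) - n < n then lf (uu ⟨(i : ℕ) - n, h2⟩)
  else lf (ones n)

noncomputable def cAll (n : ℕ) : Fin (2*n+1) → ℝ := fun i =>
  if (i : ℕ) < n then 0 else if (i : ℕ) - n < n then 1 - tt else 1

lemma rowAll_ne_zero (hn : 3 ≤ n) (i : Fin (2*n+1)) : rowAll n i ≠ 0 := by
  unfold rowAll
  by_cases h : (i : ℕ) < n
  · rw [dif_pos h]
    exact lf_ne_zero ⟨i, h⟩ (by simp [negE])
  · rw [dif_neg h]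
    by_cases h2 : (i : ℕ) - n < n
    · rw [dif_pos h2]
      exact lf_ne_zero ⟨(i:ℕ) - n, h2⟩ (by rw [uu_self]; norm_num)
    · rw [dif_neg h2]
      have : 0 < n := by omega
      exact lf_ne_zero ⟨0, this⟩ (by simp [ones])


lemma KK_eq_rows : KK n = {x | ∀ i, rowAll n i x ≤ cAll n i} := by
  ext x
  constructor
  · intro hx i
    unfold rowAll cAll
    by_cases h : (i : ℕ) < n
    · rw [dif_pos h, if_pos h, lf_negE]
      linarith [hx.1 ⟨i, h⟩]
    · rw [dif_neg h, if_neg h]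
      by_cases h2 : (i : ℕ) - n < n
      · rw [dif_pos h2, if_pos h2]
        exact hx.2.2 _
      · rw [dif_neg h2, if_neg h2, lf_ones]
        exact hx.2.1
  · intro hx
    refine ⟨fun k => ?_, ?_, fun cc => ?_⟩
    · have h := hx ⟨(k : ℕ), by omega⟩
      unfold rowAll cAll at h
      have hlt : ((⟨(k : ℕ), by omega⟩ : Fin (2*n+1)) : ℕ) < n := k.isLt
      rw [dif_pos hlt, if_pos hlt, lf_negE] at h
      have hk : (⟨((⟨(k : ℕ), by omega⟩ : Fin (2*n+1)) : ℕ), hlt⟩ : Fin n) = k := by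
        apply Fin.ext; rfl
      rw [hk] at h
      linarith
    · have h := hx ⟨2*n, by omega⟩
      unfold rowAll cAll at h
      have h1 : ¬ ((⟨2*n, by omega⟩ : Fin (2*n+1)) : ℕ) < n := by simp; omega
      have h2 : ¬ ((⟨2*n, by omega⟩ : Fin (2*n+1)) : ℕ) - n < n := by simp; omega
      rw [dif_neg h1, if_neg h1, dif_neg h2, if_neg h2, lf_ones] at h
      exact h
    · have h := hx ⟨n + (cc : ℕ), by omega⟩
      unfold rowAll cAll at h
      have h1 : ¬ ((⟨n + (cc : ℕ), by omega⟩ : Fin (2*n+1)) : ℕ) < n := by simp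
      have h2 : ((⟨n + (cc : ℕ), by omega⟩ : Fin (2*n+1)) : ℕ) - n < n := by
        simp
      rw [dif_neg h1, if_neg h1, dif_pos h2, if_pos h2] at h
      have hk : (⟨((⟨n + (cc : ℕ), by omega⟩ : Fin (2*n+1)) : ℕ) - n, h2⟩ : Fin n) = cc := by
        apply Fin.ext
        simp
      rw [hk] at h
      exact h

lemma KK_bounded : Bornology.IsBounded (KK n) := by
  rw [isBounded_iff_forall_norm_le]
  refine ⟨1, fun x hx => ?_⟩
  rw [pi_norm_le_iff_of_nonneg (by norm_num)]
  intro k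
  rw [Real.norm_eq_abs, abs_le]
  constructor
  · linarith [hx.1 k]
  · have hle : x k ≤ ∑ m, x m :=
      Finset.single_le_sum (fun m _ => hx.1 m) (Finset.mem_univ k)
    linarith [hx.2.1]

lemma KK_dim : Module.finrank ℝ (affineSpan ℝ (KK n)).direction = n := by
  have hE : ∀ k : Fin n, (Ee k : Fin n → ℝ) ∈ (affineSpan ℝ (KK n)).direction := by
    intro k
    have h1 : vc k ∈ affineSpan ℝ (KK n) := subset_affineSpan ℝ _ (vc_mem k)
    have h0 : (0 : Fin n → ℝ) ∈ affineSpan ℝ (KK n) := subset_affineSpan ℝ _ zero_mem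
    have h2 := AffineSubspace.vsub_mem_direction h1 h0
    have h3 : vc k -ᵥ (0 : Fin n → ℝ) = (1 - tt) • Ee k := by
      rw [vsub_eq_sub, sub_zero, vc_decomp]
    rw [h3] at h2
    have h4 := Submodule.smul_mem _ (1 - tt)⁻¹ h2
    rwa [smul_smul, inv_mul_cancel₀ (by norm_num [tt] : (1:ℝ) - tt ≠ 0), one_smul] at h4
  have htop : (affineSpan ℝ (KK n)).direction = ⊤ := by
    rw [eq_top_iff]
    intro x _
    rw [pi_eq_sum_univ x]
    exact Submodule.sum_mem _ (fun i _ => Submodule.smul_mem _ _ (hE i))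
  rw [htop, finrank_top]
  exact Module.finrank_fin_fun ℝ

end NSP


/-- Lemma A.1 (convex polyhedra without sectional projections): for every `n ≥ 3`
there is an `n`-dimensional bounded convex polyhedron `K ⊆ ℝ^n` such that for every
nonzero vector `v` and every affine hyperplane `H = {x | L x = c}` whose direction
does not contain `v`, the projection onto `H` parallel to `v` satisfies
`π(K) ≠ K ∩ H`. -/
theorem exists_polyhedron_without_sectional_projections (n : ℕ) (hn : 3 ≤ n) :
    ∃ K : Set (Fin n → ℝ), IsConvexPolyhedron n K ∧ IsBounded K ∧ polyDim n K = n ∧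
      ∀ (v : Fin n → ℝ) (L : (Fin n → ℝ) →ₗ[ℝ] ℝ) (c : ℝ),
        v ≠ 0 → L ≠ 0 → L v ≠ 0 →
        (fun x => x + ((c - L x) / L v) • v) '' K ≠ K ∩ {x | L x = c} := by
  refine ⟨NSP.KK n, ?_, NSP.KK_bounded, ?_, ?_⟩
  · exact ⟨2*n+1, NSP.rowAll n, NSP.cAll n, NSP.rowAll_ne_zero hn, NSP.KK_eq_rows⟩
  · exact NSP.KK_dim
  · intro v L c hv hL hLv hEq
    exact NSP.main hn v L c hv hL hLv hEq
end

section
/- Let n ≥ 4 and let P ⊂ ℝ^{n−1} be a bounded convex polyhedron of dimension n−1 without sectional projections, that is: for every nonzero vector w ∈ ℝ^{n−1} and every affine hyperplane H ⊂ ℝ^{n−1} whose direction does not contain w, the projection ρ : ℝ^{n−1} → H parallel to w satisfies ρ(P) ≠ P ∩ H. Set K := P × [0,∞) ⊂ ℝ^n. Then K cannot be placed in first trimming position with respect to any of its facets, and K cannot be placed in second trimming position with respect to any of its unbounded facets. -/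
open Bornology Pointwise

namespace CTPaux

/-- The last standard basis vector of `ℝ^n`. -/
def eN (n : ℕ) : Fin n → ℝ := fun i => if (i : ℕ) = n - 1 then 1 else 0

/-- Extension by zero `ℝ^{n-1} → ℝ^n`. -/
def iota (n : ℕ) : (Fin (n - 1) → ℝ) →ₗ[ℝ] (Fin n → ℝ) where
  toFun p := fun i => if h : (i : ℕ) < n - 1 then p ⟨i, h⟩ else 0
  map_add' p q := by funext i; by_cases h : (i : ℕ) < n - 1 <;> simp [h]
  map_smul' c p := by funext i; by_cases h : (i : ℕ) < n - 1 <;> simp [h]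

lemma iota_apply {n : ℕ} (p : Fin (n - 1) → ℝ) (i : Fin n) :
    iota n p i = if h : (i : ℕ) < n - 1 then p ⟨i, h⟩ else 0 := rfl

lemma iota_apply_castLE {n : ℕ} (h1 : n - 1 ≤ n) (p : Fin (n - 1) → ℝ) (j : Fin (n - 1)) :
    iota n p (Fin.castLE h1 j) = p j := by
  rw [iota_apply, dif_pos (by simpa using j.isLt)]
  congr 1

lemma iota_apply_last {n : ℕ} (h2 : n - 1 < n) (p : Fin (n - 1) → ℝ) :
    iota n p ⟨n - 1, h2⟩ = 0 := by
  rw [iota_apply, dif_neg]; simp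

lemma eN_castLE {n : ℕ} (h1 : n - 1 ≤ n) (j : Fin (n - 1)) :
    eN n (Fin.castLE h1 j) = 0 := by
  have := j.isLt
  simp only [eN, Fin.coe_castLE]
  rw [if_neg]; omega

lemma eN_last {n : ℕ} (h2 : n - 1 < n) : eN n ⟨n - 1, h2⟩ = 1 := by simp [eN]

lemma eN_ne_zero {n : ℕ} (h2 : n - 1 < n) : eN n ≠ 0 := by
  intro h
  have := congrFun h ⟨n - 1, h2⟩
  rw [eN_last h2] at this
  simpa using this

/-- decomposition of a vector into its `ℝ^{n-1}` part and its last coordinate -/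
lemma decomp {n : ℕ} (h1 : n - 1 ≤ n) (h2 : n - 1 < n) (x : Fin n → ℝ) :
    iota n (fun j => x (Fin.castLE h1 j)) = x - x ⟨n - 1, h2⟩ • eN n := by
  funext i
  rw [iota_apply, Pi.sub_apply, Pi.smul_apply, smul_eq_mul]
  by_cases h : (i : ℕ) < n - 1
  · rw [dif_pos h]
    have hx : x (Fin.castLE h1 ⟨(i : ℕ), h⟩) = x i := by congr 1
    have he : eN n i = 0 := if_neg (by omega)
    rw [hx, he]; ring
  · have hi : (i : ℕ) = n - 1 := by have := i.isLt; omega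
    rw [dif_neg h]
    have he : eN n i = 1 := if_pos hi
    have hx : x i = x ⟨n - 1, h2⟩ := by congr 1; exact Fin.ext (by simp [hi])
    rw [he, hx]; ring

lemma projLast_add {n : ℕ} (a b : Fin n → ℝ) :
    projLast n (a + b) = projLast n a + projLast n b := by
  funext i
  simp only [projLast, Pi.add_apply]
  split <;> simp

lemma projLast_smul {n : ℕ} (s : ℝ) (a : Fin n → ℝ) :
    projLast n (s • a) = s • projLast n a := by
  funext i
  simp only [projLast, Pi.smul_apply, smul_eq_mul]
  split <;> simp

lemma projLast_eq {n : ℕ} (h2 : n - 1 < n) (z : Fin n → ℝ) :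
    projLast n z = z + (-(z ⟨n - 1, h2⟩)) • eN n := by
  funext i
  simp only [projLast, Pi.add_apply, Pi.smul_apply, smul_eq_mul, eN]
  by_cases hi : (i : ℕ) = n - 1
  · rw [if_pos hi, if_pos hi]
    have hx : z i = z ⟨n - 1, h2⟩ := by congr 1; exact Fin.ext (by simp [hi])
    rw [hx]; ring
  · rw [if_neg hi, if_neg hi]; ring

lemma projLast_last {n : ℕ} (h2 : n - 1 < n) (z : Fin n → ℝ) :
    projLast n z ⟨n - 1, h2⟩ = 0 := by
  simp [projLast]

/-- A set containing a ray is unbounded. -/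
lemma not_isBounded_of_ray {m : ℕ} {a w : Fin m → ℝ} (hw : w ≠ 0)
    {S : Set (Fin m → ℝ)} (h : ∀ s : ℝ, 0 ≤ s → a + s • w ∈ S) :
    ¬ Bornology.IsBounded S := by
  intro hb
  obtain ⟨M, hM⟩ := isBounded_iff_forall_norm_le.1 hb
  have hwpos : 0 < ‖w‖ := norm_pos_iff.2 hw
  set s : ℝ := (M + ‖a‖ + 1) / ‖w‖ with hs
  have hM0 : ‖a‖ ≤ M := by
    have := hM a (by simpa using h 0 le_rfl)
    simpa using this
  have hs0 : 0 ≤ s := div_nonneg (by linarith [norm_nonneg a]) hwpos.le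
  have h1 := hM _ (h s hs0)
  have h2 : s * ‖w‖ = M + ‖a‖ + 1 := div_mul_cancel₀ _ hwpos.ne'
  have h3 : s * ‖w‖ ≤ ‖a + s • w‖ + ‖a‖ := by
    have h4 : ‖s • w‖ ≤ ‖a + s • w‖ + ‖a‖ := by
      have h5 := norm_sub_le (a + s • w) a
      simpa using h5
    calc s * ‖w‖ ≤ |s| * ‖w‖ := by
          exact mul_le_mul_of_nonneg_right (le_abs_self s) (norm_nonneg w)
      _ = ‖s • w‖ := by rw [norm_smul, Real.norm_eq_abs]
      _ ≤ _ := h4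
  linarith

/-- If `|a + t b| ≤ R` for all large `t`, then `b = 0`. -/
lemma eq_zero_of_abs_add_le {a b R t0 : ℝ} (h : ∀ t : ℝ, t0 ≤ t → |a + t * b| ≤ R) :
    b = 0 := by
  by_contra hb
  have hbpos : 0 < |b| := abs_pos.2 hb
  set t : ℝ := max t0 ((R + |a| + 1) / |b|) with ht
  have h1 := h t (le_max_left _ _)
  have h2 : R + |a| + 1 ≤ t * |b| :=
    (div_le_iff₀ hbpos).1 (le_max_right t0 ((R + |a| + 1) / |b|))
  have h3 : t * |b| ≤ |a + t * b| + |a| := by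
    have h4 : |t * b| ≤ |a + t * b| + |a| := by
      calc |t * b| = |(a + t * b) - a| := by ring_nf
        _ ≤ |a + t * b| + |a| := abs_sub _ _
    calc t * |b| ≤ |t| * |b| := mul_le_mul_of_nonneg_right (le_abs_self t) (abs_nonneg b)
      _ = |t * b| := (abs_mul t b).symm
      _ ≤ _ := h4
  linarith

lemma affine_add {n : ℕ} (T : (Fin n → ℝ) ≃ᵃ[ℝ] (Fin n → ℝ)) (a b : Fin n → ℝ) :
    T (a + b) = T a + T.linear b := by
  have h1 := T.map_vadd a b
  rw [vadd_eq_add, vadd_eq_add] at h1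
  rw [add_comm a b, h1, add_comm]

lemma affine_symm_add {n : ℕ} (T : (Fin n → ℝ) ≃ᵃ[ℝ] (Fin n → ℝ)) (a b : Fin n → ℝ) :
    T.symm (a + b) = T.symm a + T.linear.symm b := by
  have h1 := affine_add T.symm a b
  rw [h1, AffineEquiv.linear_symm]


/-- Main auxiliary lemma: if `A_{T(K)}` is bounded and the image of the
recession direction of `K` under `T.linear` has vanishing last coordinate,
then `P` has a sectional projection, contradiction. -/
lemma aux_main (n : ℕ) (hn : 4 ≤ n)
    (P : Set (Fin (n - 1) → ℝ))
    (hnsp : ∀ (w : Fin (n - 1) → ℝ) (L : (Fin (n - 1) → ℝ) →ₗ[ℝ] ℝ) (c : ℝ),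
      w ≠ 0 → L ≠ 0 → L w ≠ 0 →
      (fun x => x + ((c - L x) / L w) • w) '' P ≠ P ∩ {x | L x = c})
    (K : Set (Fin n → ℝ))
    (hK : K = {x : Fin n → ℝ |
      (fun j : Fin (n - 1) => x (Fin.castLE (by omega) j)) ∈ P ∧
      0 ≤ x ⟨n - 1, by omega⟩})
    (T : (Fin n → ℝ) ≃ᵃ[ℝ] (Fin n → ℝ))
    (hw0 : T.linear (eN n) ⟨n - 1, by omega⟩ = 0)
    (hA : Bornology.IsBounded (AKset n (T '' K))) : False := by
  have hle : n - 1 ≤ n := by omega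
  have hlt : n - 1 < n := by omega
  set last : Fin n := ⟨n - 1, hlt⟩ with hlastdef
  set w : Fin n → ℝ := T.linear (eN n) with hwdef
  set v : Fin n → ℝ := T.linear.symm (eN n) with hvdef
  have hwlast : w last = 0 := hw0
  have hwne : w ≠ 0 := by
    intro h
    apply eN_ne_zero hlt
    have : T.linear.symm w = T.linear.symm 0 := by rw [h]
    simpa [hwdef] using this
  have memK : ∀ x : Fin n → ℝ, x ∈ K ↔
      ((fun j : Fin (n - 1) => x (Fin.castLE hle j)) ∈ P ∧ 0 ≤ x last) := by
    intro x; rw [hK]; exact Iff.rfl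
  set v' : Fin (n - 1) → ℝ := fun j => v (Fin.castLE hle j) with hv'def
  set L : (Fin (n - 1) → ℝ) →ₗ[ℝ] ℝ :=
    (LinearMap.proj last).comp
      ((T.linear : (Fin n → ℝ) →ₗ[ℝ] (Fin n → ℝ)).comp (iota n)) with hLdef
  have hLapp : ∀ p : Fin (n - 1) → ℝ, L p = T.linear (iota n p) last := fun p => rfl
  set c : ℝ := -(T 0 last) with hcdef
  -- L v' = 1
  have hiv' : iota n v' = v - v last • eN n := decomp hle hlt v
  have hTlv : T.linear v = eN n := by rw [hvdef]; exact T.linear.apply_symm_apply _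
  have hLv' : L v' = 1 := by
    rw [hLapp, hiv', map_sub, map_smul, hTlv]
    rw [Pi.sub_apply, Pi.smul_apply, smul_eq_mul, eN_last hlt]
    rw [show (T.linear) (eN n) = w from rfl, hwlast]
    ring
  -- main claim: the parallel projection of P lands inside P
  have main : ∀ p ∈ P, p + (c - L p) • v' ∈ P := by
    intro p hp
    by_contra hq
    set a : Fin n → ℝ := T (iota n p) with hadef
    have halast : a last = L p - c := by
      have h0 : T (0 + iota n p) = T 0 + T.linear (iota n p) := affine_add T 0 (iota n p)
      rw [zero_add] at h0
      rw [hadef, h0, Pi.add_apply, hLapp p, hcdef]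
      ring
    -- points of the vertical ray over p are in K
    have hKx : ∀ s : ℝ, 0 ≤ s → iota n p + s • eN n ∈ K := by
      intro s hs
      rw [memK]
      constructor
      · have hfun : (fun j => (iota n p + s • eN n) (Fin.castLE hle j)) = p := by
          funext j
          rw [Pi.add_apply, Pi.smul_apply, iota_apply_castLE hle, eN_castLE hle,
            smul_eq_mul, mul_zero, add_zero]
        rw [hfun]; exact hp
      · rw [Pi.add_apply, Pi.smul_apply, hlastdef, iota_apply_last hlt, eN_last hlt,
          smul_eq_mul, mul_one, zero_add]
        exact hs
    have hTx : ∀ s : ℝ, T (iota n p + s • eN n) = a + s • w := by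
      intro s
      rw [affine_add T, map_smul, hadef]
    have hprojw : projLast n w = w := by
      funext i
      by_cases hi : (i : ℕ) = n - 1
      · have hieq : i = last := Fin.ext (by simpa using hi)
        rw [hieq, projLast_last hlt, hwlast]
      · simp [projLast, hi]
    have hprojTx : ∀ s : ℝ, projLast n (T (iota n p + s • eN n)) = projLast n a + s • w := by
      intro s
      rw [hTx, projLast_add, projLast_smul, hprojw]
    -- the ray lies in A_K
    have hray : ∀ s : ℝ, 0 ≤ s → projLast n a + s • w ∈ AKset n (T '' K) := by
      intro s hs
      refine ⟨?_, ⟨T (iota n p + s • eN n), hprojTx s, Set.mem_image_of_mem T (hKx s hs)⟩, ?_⟩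
      · intro i hi
        have hieq : i = last := Fin.ext (by simpa using hi)
        rw [hieq, Pi.add_apply, Pi.smul_apply, projLast_last hlt, hwlast,
          smul_eq_mul, mul_zero, add_zero]
      · -- not in T '' K
        rintro ⟨z, hz, hzeq⟩
        have hY : projLast n a + s • w = T (iota n p + s • eN n) + (c - L p) • eN n := by
          rw [← hprojTx s, hTx s, projLast_eq hlt (a + s • w)]
          congr 1
          rw [Pi.add_apply, Pi.smul_apply, smul_eq_mul, halast, hwlast]
          congr 1
          ring
        have hz2 : z = iota n p + s • eN n + (c - L p) • v := by
          have h1 : z = T.symm (projLast n a + s • w) := by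
            rw [← hzeq, AffineEquiv.symm_apply_apply]
          rw [h1, hY, affine_symm_add, AffineEquiv.symm_apply_apply, map_smul, ← hvdef]
        rw [memK] at hz
        apply hq
        have hfun : (fun j => z (Fin.castLE hle j)) = p + (c - L p) • v' := by
          funext j
          rw [hz2, Pi.add_apply, Pi.add_apply, Pi.smul_apply, Pi.smul_apply,
            iota_apply_castLE hle, eN_castLE hle, Pi.add_apply, Pi.smul_apply, hv'def]
          simp only [smul_eq_mul]
          ring
        rw [hfun] at hz
        exact hz.1
    exact not_isBounded_of_ray hwne hray hA
  -- assemble the contradiction with hnsp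
  have hv'0 : v' ≠ 0 := by
    intro h
    rw [h, map_zero] at hLv'
    exact one_ne_zero hLv'.symm
  have hL0 : L ≠ 0 := by
    intro h
    rw [h] at hLv'
    simp at hLv'
  apply hnsp v' L c hv'0 hL0 (by rw [hLv']; exact one_ne_zero)
  ext q
  simp only [Set.mem_image, Set.mem_inter_iff, Set.mem_setOf_eq]
  constructor
  · rintro ⟨p, hp, rfl⟩
    simp only [hLv', div_one]
    refine ⟨main p hp, ?_⟩
    rw [map_add, map_smul, hLv', smul_eq_mul, mul_one]
    ring
  · rintro ⟨hq, hqc⟩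
    refine ⟨q, hq, ?_⟩
    simp only [hqc, sub_self, zero_div, zero_smul, add_zero]

end CTPaux

/-- Corollary A.2 (counterexamples to the trimming positions): if `P ⊆ ℝ^{n-1}`
(`n ≥ 4`) is a bounded convex polyhedron of dimension `n-1` without sectional
projections, then `K := P × [0,∞) ⊆ ℝ^n` can be placed neither in first trimming
position with respect to any of its facets nor in second trimming position with
respect to any of its unbounded facets. -/
theorem counterexample_to_trimming_positions (n : ℕ) (hn : 4 ≤ n)
    (P : Set (Fin (n - 1) → ℝ)) (hpoly : IsConvexPolyhedron (n - 1) P)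
    (hbd : IsBounded P) (hdim : polyDim (n - 1) P = n - 1)
    (hnsp : ∀ (w : Fin (n - 1) → ℝ) (L : (Fin (n - 1) → ℝ) →ₗ[ℝ] ℝ) (c : ℝ),
      w ≠ 0 → L ≠ 0 → L w ≠ 0 →
      (fun x => x + ((c - L x) / L w) • w) '' P ≠ P ∩ {x | L x = c})
    (K : Set (Fin n → ℝ))
    (hK : K = {x : Fin n → ℝ |
      (fun j : Fin (n - 1) => x (Fin.castLE (by omega) j)) ∈ P ∧
      0 ≤ x ⟨n - 1, by omega⟩}) :
    (∀ F, IsFacetOf n K F →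
      ¬ ∃ T : (Fin n → ℝ) ≃ᵃ[ℝ] (Fin n → ℝ),
        FirstTrimmingPosition n (T '' K) (T '' F)) ∧
    (∀ F, IsFacetOf n K F → ¬ IsBounded F →
      ¬ ∃ T : (Fin n → ℝ) ≃ᵃ[ℝ] (Fin n → ℝ),
        SecondTrimmingPosition n (T '' K) (T '' F)) := by
  have hle : n - 1 ≤ n := by omega
  have hlt : n - 1 < n := by omega
  set last : Fin n := ⟨n - 1, hlt⟩ with hlastdef
  have memK : ∀ x : Fin n → ℝ, x ∈ K ↔
      ((fun j : Fin (n - 1) => x (Fin.castLE hle j)) ∈ P ∧ 0 ≤ x last) := by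
    intro x; rw [hK]; exact Iff.rfl
  have hPne : P.Nonempty := by
    by_contra h
    rw [Set.not_nonempty_iff_eq_empty] at h
    have i0 : Fin (n - 1) := ⟨0, by omega⟩
    refine hnsp (Pi.single i0 1) (LinearMap.proj i0) 0 ?_ ?_ ?_ ?_
    · intro hc
      have := congrFun hc i0
      simp at this
    · intro hc
      have h1 : (LinearMap.proj i0 : (Fin (n - 1) → ℝ) →ₗ[ℝ] ℝ) (Pi.single i0 1) = 0 := by
        rw [hc]; rfl
      simp [LinearMap.proj_apply] at h1
    · simp [LinearMap.proj_apply]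
    · rw [h]; simp
  obtain ⟨R, hR⟩ := isBounded_iff_forall_norm_le.1 hbd
  constructor
  · -- first trimming position
    rintro F hF ⟨T, hFT⟩
    obtain ⟨-, -, -, hfib, hA⟩ := hFT
    obtain ⟨p0, hp0⟩ := hPne
    have hKx : ∀ s : ℝ, 0 ≤ s → CTPaux.iota n p0 + s • CTPaux.eN n ∈ K := by
      intro s hs
      rw [memK]
      constructor
      · have hfun : (fun j => (CTPaux.iota n p0 + s • CTPaux.eN n) (Fin.castLE hle j)) = p0 := by
          funext j
          rw [Pi.add_apply, Pi.smul_apply, CTPaux.iota_apply_castLE hle,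
            CTPaux.eN_castLE hle, smul_eq_mul, mul_zero, add_zero]
        rw [hfun]; exact hp0
      · rw [Pi.add_apply, Pi.smul_apply, hlastdef, CTPaux.iota_apply_last hlt,
          CTPaux.eN_last hlt, smul_eq_mul, mul_one, zero_add]
        exact hs
    set w : Fin n → ℝ := T.linear (CTPaux.eN n) with hwdef
    have hwne : w ≠ 0 := by
      intro h
      apply CTPaux.eN_ne_zero hlt
      have : T.linear.symm w = T.linear.symm 0 := by rw [h]
      simpa [hwdef] using this
    have hTx : ∀ s : ℝ, T (CTPaux.iota n p0 + s • CTPaux.eN n) = T (CTPaux.iota n p0) + s • w := by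
      intro s
      rw [CTPaux.affine_add T, map_smul]
    by_cases hpz : projLast n w = 0
    · -- the fiber over `projLast (T (ι p0))` contains a ray
      refine CTPaux.not_isBounded_of_ray hwne (a := T (CTPaux.iota n p0))
        (S := {x | projLast n x = projLast n (T (CTPaux.iota n p0))} ∩ (T '' K)) ?_
        (hfib (projLast n (T (CTPaux.iota n p0))))
      intro s hs
      refine ⟨?_, ?_⟩
      · show projLast n (T (CTPaux.iota n p0) + s • w) = projLast n (T (CTPaux.iota n p0))
        rw [CTPaux.projLast_add, CTPaux.projLast_smul, hpz, smul_zero, add_zero]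
      · exact ⟨CTPaux.iota n p0 + s • CTPaux.eN n, hKx s hs, hTx s⟩
    · -- A_K bounded forces collinear points in K, whence `w last = 0`
      obtain ⟨M, hM⟩ := isBounded_iff_forall_norm_le.1 hA
      set pw : Fin n → ℝ := projLast n w with hpwdef
      set a0 : Fin n → ℝ := projLast n (T (CTPaux.iota n p0)) with ha0def
      set v1 : Fin n → ℝ := T.linear.symm pw with hv1def
      have hpwn : 0 < ‖pw‖ := norm_pos_iff.2 hpz
      set t0 : ℝ := max 0 ((M + ‖a0‖ + 1) / ‖pw‖) with ht0def
      have hyK : ∀ t : ℝ, t0 ≤ t → T.symm (a0 + t • pw) ∈ K := by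
        intro t ht
        have ht0 : (0 : ℝ) ≤ t := le_trans (le_max_left _ _) ht
        have hy1 : ∀ i : Fin n, (i : ℕ) = n - 1 → (a0 + t • pw) i = 0 := by
          intro i hi
          have hieq : i = last := Fin.ext (by simpa using hi)
          rw [hieq, Pi.add_apply, Pi.smul_apply, ha0def, hpwdef,
            CTPaux.projLast_last hlt, CTPaux.projLast_last hlt, smul_eq_mul, mul_zero,
            add_zero]
        have hy2 : ({x | projLast n x = a0 + t • pw} ∩ (T '' K)).Nonempty := by
          refine ⟨T (CTPaux.iota n p0 + t • CTPaux.eN n), ?_,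
            Set.mem_image_of_mem T (hKx t ht0)⟩
          show projLast n (T (CTPaux.iota n p0 + t • CTPaux.eN n)) = a0 + t • pw
          rw [hTx, CTPaux.projLast_add, CTPaux.projLast_smul]
        have hynorm : M < ‖a0 + t • pw‖ := by
          have h1 : t * ‖pw‖ ≤ ‖a0 + t • pw‖ + ‖a0‖ := by
            have h4 : ‖t • pw‖ ≤ ‖a0 + t • pw‖ + ‖a0‖ := by
              have h5 := norm_sub_le (a0 + t • pw) a0
              simpa using h5
            calc t * ‖pw‖ ≤ |t| * ‖pw‖ :=
                  mul_le_mul_of_nonneg_right (le_abs_self t) (norm_nonneg pw)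
              _ = ‖t • pw‖ := by rw [norm_smul, Real.norm_eq_abs]
              _ ≤ _ := h4
          have h2 : (M + ‖a0‖ + 1) / ‖pw‖ ≤ t := le_trans (le_max_right _ _) ht
          have h3 : M + ‖a0‖ + 1 ≤ t * ‖pw‖ := (div_le_iff₀ hpwn).1 h2
          linarith
        have hnot : a0 + t • pw ∉ AKset n (T '' K) := fun hmem =>
          absurd (hM _ hmem) (not_le.2 hynorm)
        have hyT : a0 + t • pw ∈ T '' K := by
          by_contra hout
          exact hnot ⟨hy1, hy2, hout⟩
        obtain ⟨z, hzK, hzeq⟩ := hyT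
        rw [← hzeq, AffineEquiv.symm_apply_apply]
        exact hzK
      have hsplit : ∀ t : ℝ, T.symm (a0 + t • pw) = T.symm a0 + t • v1 := by
        intro t
        rw [CTPaux.affine_symm_add, map_smul, hv1def]
      have hcoord : ∀ j : Fin (n - 1), v1 (Fin.castLE hle j) = 0 := by
        intro j
        refine CTPaux.eq_zero_of_abs_add_le (a := T.symm a0 (Fin.castLE hle j))
          (R := R) (t0 := t0) ?_
        intro t ht
        have h := hyK t ht
        rw [memK] at h
        have hnorm := hR _ h.1
        have heval := norm_le_pi_norm (fun j' => T.symm (a0 + t • pw) (Fin.castLE hle j')) j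
        rw [Real.norm_eq_abs] at heval
        have heq : T.symm (a0 + t • pw) (Fin.castLE hle j)
            = T.symm a0 (Fin.castLE hle j) + t * v1 (Fin.castLE hle j) := by
          rw [hsplit, Pi.add_apply, Pi.smul_apply, smul_eq_mul]
        rw [heq] at heval
        exact le_trans heval hnorm
      have hv1eq : v1 = v1 last • CTPaux.eN n := by
        funext i
        by_cases hi : (i : ℕ) < n - 1
        · have hieq : i = Fin.castLE hle ⟨(i : ℕ), hi⟩ := Fin.ext (by simp)
          rw [Pi.smul_apply, smul_eq_mul]
          have he : CTPaux.eN n i = 0 := by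
            simp only [CTPaux.eN]
            rw [if_neg]; omega
          rw [he, mul_zero, hieq, hcoord]
        · have hieq : i = last := Fin.ext (by show (i : ℕ) = n - 1; have := i.isLt; omega)
          rw [hieq, Pi.smul_apply, smul_eq_mul, CTPaux.eN_last hlt, mul_one]
      have hlinv : pw = v1 last • w := by
        conv_lhs => rw [← T.linear.apply_symm_apply pw, ← hv1def, hv1eq]
        rw [map_smul, hwdef]
      have hpwlast : pw last = 0 := by
        rw [hpwdef, CTPaux.projLast_last hlt]
      have hvl : v1 last ≠ 0 := by
        intro h0
        rw [h0, zero_smul] at hlinv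
        exact hpz hlinv
      have hwlast : w last = 0 := by
        have h1 := congrFun hlinv last
        rw [hpwlast, Pi.smul_apply, smul_eq_mul] at h1
        rcases mul_eq_zero.1 h1.symm with h2 | h2
        · exact absurd h2 hvl
        · exact h2
      exact CTPaux.aux_main n hn P hnsp K hK T hwlast hA
  · -- second trimming position
    rintro F hF hFub ⟨T, hST⟩
    obtain ⟨-, hTF0, -, hA⟩ := hST
    obtain ⟨⟨Lf, cf, hLfne, hFne, hLfle, hFeq⟩, -⟩ := hF
    have hR0 : 0 ≤ R := by
      obtain ⟨p0, hp0⟩ := hPne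
      exact le_trans (norm_nonneg p0) (hR p0 hp0)
    set Φ := LinearMap.toContinuousLinearMap (Lf.comp (CTPaux.iota n)) with hΦdef
    have hC : ∀ p ∈ P, |Lf (CTPaux.iota n p)| ≤ ‖Φ‖ * R := by
      intro p hp
      have h1 : |Lf (CTPaux.iota n p)| = ‖Φ p‖ := by
        rw [Real.norm_eq_abs]
        congr 1
      rw [h1]
      calc ‖Φ p‖ ≤ ‖Φ‖ * ‖p‖ := Φ.le_opNorm p
        _ ≤ ‖Φ‖ * R := mul_le_mul_of_nonneg_left (hR p hp) (norm_nonneg Φ)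
    have hdecomp : ∀ x : Fin n → ℝ,
        x = CTPaux.iota n (fun j => x (Fin.castLE hle j)) + x last • CTPaux.eN n := by
      intro x
      rw [CTPaux.decomp hle hlt x, sub_add_cancel]
    -- Lf vanishes on the recession direction
    have hLfu : Lf (CTPaux.eN n) = 0 := by
      by_contra hne0
      apply hFub
      have habs : 0 < |Lf (CTPaux.eN n)| := abs_pos.2 hne0
      set B : ℝ := (|cf| + ‖Φ‖ * R) / |Lf (CTPaux.eN n)| with hBdef
      have hB0 : 0 ≤ B := div_nonneg (by positivity) habs.le
      refine isBounded_iff_forall_norm_le.2 ⟨max R B, ?_⟩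
      intro x hx
      rw [hFeq] at hx
      obtain ⟨hxK, hxc⟩ := hx
      rw [memK] at hxK
      obtain ⟨hp, hxl⟩ := hxK
      have h2 : Lf x = Lf (CTPaux.iota n (fun j => x (Fin.castLE hle j)))
          + x last * Lf (CTPaux.eN n) := by
        conv_lhs => rw [hdecomp x]
        rw [map_add, map_smul, smul_eq_mul]
      have hxlast : x last ≤ B := by
        have h3 : x last * Lf (CTPaux.eN n) = cf - Lf (CTPaux.iota n (fun j => x (Fin.castLE hle j))) := by
          rw [← hxc, h2]; ring
        have h4 : |x last| * |Lf (CTPaux.eN n)| ≤ |cf| + ‖Φ‖ * R := by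
          rw [← abs_mul, h3]
          calc |cf - Lf (CTPaux.iota n (fun j => x (Fin.castLE hle j)))|
              ≤ |cf| + |Lf (CTPaux.iota n (fun j => x (Fin.castLE hle j)))| := abs_sub _ _
            _ ≤ |cf| + ‖Φ‖ * R := by
                have := hC _ hp
                linarith
        have h5 : |x last| ≤ B := by
          rw [hBdef, le_div_iff₀ habs]
          exact h4
        exact le_trans (le_abs_self _) h5
      refine (pi_norm_le_iff_of_nonneg (le_trans hR0 (le_max_left _ _))).2 ?_
      intro i
      by_cases hi : (i : ℕ) < n - 1
      · have hieq : i = Fin.castLE hle ⟨(i : ℕ), hi⟩ := Fin.ext (by simp)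
        have h6 : ‖x i‖ ≤ ‖fun j => x (Fin.castLE hle j)‖ := by
          rw [hieq]
          exact norm_le_pi_norm (fun j => x (Fin.castLE hle j)) ⟨(i : ℕ), hi⟩
        exact le_trans h6 (le_trans (hR _ hp) (le_max_left _ _))
      · have hieq : i = last := Fin.ext (by show (i : ℕ) = n - 1; have := i.isLt; omega)
        rw [hieq, Real.norm_eq_abs, abs_of_nonneg hxl]
        exact le_trans hxlast (le_max_right _ _)
    obtain ⟨x0, hx0⟩ := hFne
    have hrayF : ∀ s : ℝ, 0 ≤ s → x0 + s • CTPaux.eN n ∈ K ∩ {x | Lf x = cf} := by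
      intro s hs
      refine ⟨?_, ?_⟩
      · rw [memK]
        constructor
        · have hfun : (fun j => (x0 + s • CTPaux.eN n) (Fin.castLE hle j))
              = fun j => x0 (Fin.castLE hle j) := by
            funext j
            rw [Pi.add_apply, Pi.smul_apply, CTPaux.eN_castLE hle, smul_eq_mul,
              mul_zero, add_zero]
          rw [hfun]
          exact ((memK x0).1 hx0.1).1
        · rw [Pi.add_apply, Pi.smul_apply, CTPaux.eN_last hlt, smul_eq_mul, mul_one]
          have := ((memK x0).1 hx0.1).2
          linarith
      · show Lf (x0 + s • CTPaux.eN n) = cf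
        rw [map_add, map_smul, hLfu, smul_zero, add_zero]
        exact hx0.2
    have hwlast : T.linear (CTPaux.eN n) last = 0 := by
      have h0 : ∀ s : ℝ, 0 ≤ s → (T x0) last + s * (T.linear (CTPaux.eN n)) last = 0 := by
        intro s hs
        have hmem : T (x0 + s • CTPaux.eN n) ∈ T '' F := by
          refine Set.mem_image_of_mem T ?_
          rw [hFeq]
          exact hrayF s hs
        have h1 := hTF0 _ hmem last (by simp [hlastdef])
        have h2 : T (x0 + s • CTPaux.eN n) = T x0 + s • T.linear (CTPaux.eN n) := by
          rw [CTPaux.affine_add T, map_smul]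
        rw [h2, Pi.add_apply, Pi.smul_apply, smul_eq_mul] at h1
        exact h1
      have h00 := h0 0 le_rfl
      have h1 := h0 1 zero_le_one
      rw [zero_mul, add_zero] at h00
      rw [h00, one_mul, zero_add] at h1
      exact h1
    exact CTPaux.aux_main n hn P hnsp K hK T hwlast hA
end

section
/- Let K ⊂ ℝ^n be an n-dimensional non-degenerate unbounded convex polyhedron in FU-position with respect to ker(ĥ), with sawing hyperplane Π, and set P := K ∩ Π. Let W be an affine subspace of Π of dimension n−2 such that W ∩ P ≠ ∅ and P is contained in one of the two closed half-spaces of Π bounded by W (i.e., W supports P inside Π). Let p ∈ W ∩ P be a vertex of the polyhedron P and let A be an unbounded edge of K with A ∩ Π = {p}. Then the affine span H of W ∪ A is an affine hyperplane of ℝ^n and H is a supporting hyperplane of K. -/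
open Bornology Pointwise

section Aux

open Set

private lemma polyAux_convex {n m : ℕ} (L : Fin m → ((Fin n → ℝ) →ₗ[ℝ] ℝ)) (c : Fin m → ℝ) :
    Convex ℝ {x : Fin n → ℝ | ∀ i, L i x ≤ c i} := by
  intro x hx y hy a b ha hb hab
  rw [Set.mem_setOf_eq] at hx hy ⊢
  intro i
  have hexp : (L i) (a • x + b • y) = a * L i x + b * L i y := by
    simp [map_add, map_smul, smul_eq_mul]
  have h1 : a * L i x ≤ a * c i := mul_le_mul_of_nonneg_left (hx i) ha
  have h2 : b * L i y ≤ b * c i := mul_le_mul_of_nonneg_left (hy i) hb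
  have h3 : a * c i + b * c i = c i := by rw [← add_mul, hab, one_mul]
  rw [hexp]
  linarith

private lemma polyAux_closed {n m : ℕ} (L : Fin m → ((Fin n → ℝ) →ₗ[ℝ] ℝ)) (c : Fin m → ℝ) :
    IsClosed {x : Fin n → ℝ | ∀ i, L i x ≤ c i} := by
  have h : {x : Fin n → ℝ | ∀ i, L i x ≤ c i} = ⋂ i, {x | L i x ≤ c i} := by
    ext x; simp
  rw [h]
  exact isClosed_iInter fun i =>
    isClosed_le (L i).continuous_of_finiteDimensional continuous_const

private lemma vertex_of_midpoint_extreme {n m : ℕ} (L : Fin m → ((Fin n → ℝ) →ₗ[ℝ] ℝ))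
    (c : Fin m → ℝ) (K : Set (Fin n → ℝ)) (hK : K = {x | ∀ i, L i x ≤ c i})
    (q : Fin n → ℝ) (hq : q ∈ K)
    (hext : ∀ x ∈ K, ∀ y ∈ K, x + y = q + q → x = y)
    (hKns : ¬ K ⊆ {q}) : IsVertexOf n K q := by
  classical
  set S : Finset (Fin m) := Finset.univ.filter (fun i => L i q = c i) with hS
  set M₀ : (Fin n → ℝ) →ₗ[ℝ] ℝ := ∑ i ∈ S, L i with hM₀
  set e₀ : ℝ := ∑ i ∈ S, c i with he₀
  have hM₀app : ∀ x, M₀ x = ∑ i ∈ S, L i x := fun x => by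
    rw [hM₀]; simp [LinearMap.sum_apply]
  have hqK' : ∀ i, L i q ≤ c i := by rw [hK] at hq; exact hq
  have hMq : M₀ q = e₀ := by
    rw [hM₀app, he₀]
    exact Finset.sum_congr rfl fun i hi => (Finset.mem_filter.mp hi).2
  have hle : ∀ x ∈ K, M₀ x ≤ e₀ := by
    intro x hx
    rw [hK, Set.mem_setOf_eq] at hx
    rw [hM₀app, he₀]
    exact Finset.sum_le_sum fun i _ => hx i
  have hface : K ∩ {x | M₀ x = e₀} = {q} := by
    apply Set.Subset.antisymm
    · rintro x ⟨hxK, hxe⟩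
      have hxK' : ∀ i, L i x ≤ c i := by rw [hK, Set.mem_setOf_eq] at hxK; exact hxK
      rw [Set.mem_setOf_eq] at hxe
      have htight : ∀ i ∈ S, L i x = c i := by
        have hsum : ∑ i ∈ S, (c i - L i x) = 0 := by
          rw [Finset.sum_sub_distrib, ← he₀, ← hM₀app, hxe, sub_self]
        have := (Finset.sum_eq_zero_iff_of_nonneg
          (fun i _ => sub_nonneg.mpr (hxK' i))).mp hsum
        intro i hi
        have h := this i hi
        linarith
      rw [Set.mem_singleton_iff]
      by_contra hxq
      set v : Fin n → ℝ := x - q with hv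
      have hv0 : v ≠ 0 := sub_ne_zero.mpr hxq
      have hvS : ∀ i ∈ S, L i v = 0 := by
        intro i hi
        have h1 := (Finset.mem_filter.mp hi).2
        rw [hv, map_sub, htight i hi, h1, sub_self]
      set G : Set (Fin n → ℝ) := {y | ∀ i, i ∉ S → L i y < c i} with hG
      have hGopen : IsOpen G := by
        have hGi : G = ⋂ i, {y : Fin n → ℝ | i ∉ S → L i y < c i} := by
          ext y; simp [hG]
        rw [hGi]
        refine isOpen_iInter_of_finite fun i => ?_
        by_cases hi : i ∈ S
        · simp only [hi, not_true_eq_false, false_implies]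
          exact isOpen_univ
        · simp only [hi, not_false_eq_true, true_implies]
          exact isOpen_lt (L i).continuous_of_finiteDimensional continuous_const
      have hqG : q ∈ G := by
        intro i hi
        rcases lt_or_eq_of_le (hqK' i) with h | h
        · exact h
        · exact absurd (Finset.mem_filter.mpr ⟨Finset.mem_univ i, h⟩) hi
      have hφ : Continuous fun t : ℝ => q - t • v := by
        exact continuous_const.sub (continuous_id.smul continuous_const)
      have hnh : (fun t : ℝ => q - t • v) ⁻¹' G ∈ nhds (0 : ℝ) := by
        apply (hGopen.preimage hφ).mem_nhds
        simpa using hqG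
      obtain ⟨δ, hδ, hball⟩ := Metric.mem_nhds_iff.mp hnh
      set ε : ℝ := min (δ/2) 1 with hε
      have hε0 : 0 < ε := lt_min (by linarith) one_pos
      have hε1 : ε ≤ 1 := min_le_right _ _
      have hεG : q - ε • v ∈ G := by
        apply hball
        rw [Metric.mem_ball, dist_zero_right, Real.norm_eq_abs, abs_of_pos hε0]
        calc ε ≤ δ/2 := min_le_left _ _
          _ < δ := by linarith
      have hminus : q - ε • v ∈ K := by
        rw [hK, Set.mem_setOf_eq]
        intro i
        by_cases hi : i ∈ S
        · have heq : L i (q - ε • v) = c i := by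
            rw [map_sub, map_smul, hvS i hi, smul_eq_mul, mul_zero, sub_zero,
              (Finset.mem_filter.mp hi).2]
          exact le_of_eq heq
        · exact le_of_lt (hεG i hi)
      have hplus : q + ε • v ∈ K := by
        have hconvK : Convex ℝ K := by rw [hK]; exact polyAux_convex L c
        have hcomb := hconvK hq hxK
          (by linarith : (0:ℝ) ≤ 1 - ε) (le_of_lt hε0) (by ring)
        have heq : (1 - ε) • q + ε • x = q + ε • v := by
          rw [hv, smul_sub, sub_smul, one_smul]
          abel
        rw [← heq]
        exact hcomb
      have hcontra := hext _ hplus _ hminus (by abel)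
      rw [sub_eq_add_neg] at hcontra
      have h5 := add_left_cancel hcontra
      have h6 : ε • v + ε • v = 0 := by
        nth_rewrite 1 [h5]
        abel
      rw [← add_smul] at h6
      rcases smul_eq_zero.mp h6 with h | h
      · linarith
      · exact hv0 h
    · intro x hx
      rw [Set.mem_singleton_iff] at hx
      subst hx
      exact ⟨hq, hMq⟩
  have hM0ne : M₀ ≠ 0 := by
    intro h0
    apply hKns
    intro x hx
    have he00 : e₀ = 0 := by rw [← hMq, h0]; rfl
    have hx0 : M₀ x = e₀ := by rw [h0, he00]; rfl
    have hmem : x ∈ K ∩ {x | M₀ x = e₀} := ⟨hx, hx0⟩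
    rw [hface] at hmem
    exact hmem
  exact ⟨M₀, e₀, hM0ne, ⟨q, hq, hMq⟩, hle, hface.symm⟩

end Aux

set_option maxHeartbeats 1000000 in
/-- Lemma 1.5: let `K` be in FU-position with sawing hyperplane `Π = {x | L x + c = 0}`,
let `W ⊆ Π` be an affine subspace of dimension `n - 2` supporting `P := K ∩ Π` inside
`Π`, let `p ∈ W ∩ P` be a vertex of `P` and let `A` be an unbounded edge of `K` with
`A ∩ Π = {p}`. Then the affine span of `W ∪ A` is a supporting hyperplane of `K`. -/
theorem affineSpan_of_support_and_edge_is_supporting_hyperplane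
    (n : ℕ) (K : Set (Fin n → ℝ))
    (hpoly : IsConvexPolyhedron n K) (hdim : polyDim n K = n)
    (hnd : ∃ p, IsVertexOf n K p) (hunb : ¬ IsBounded K)
    (L : (Fin n → ℝ) →ₗ[ℝ] ℝ) (hL : L ≠ 0) (c : ℝ)
    (hsaw1 : ∀ A : Set (Fin n → ℝ), IsEdgeOf n K A → ¬ IsBounded A →
      (A ∩ {x | L x + c = 0}).Nonempty)
    (hsaw2 : ∀ p, IsVertexOf n K p → L p + c < 0)
    (g : (Fin n → ℝ) →ₗ[ℝ] ℝ) (d : ℝ) (hind : LinearIndependent ℝ ![L, g])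
    (W : Set (Fin n → ℝ)) (hW : W = {x | L x + c = 0 ∧ g x + d = 0})
    (hside : ∀ x ∈ K ∩ {x | L x + c = 0}, g x + d ≤ 0)
    (p : Fin n → ℝ) (hpW : p ∈ W)
    (hpv : IsVertexOf n (K ∩ {x | L x + c = 0}) p)
    (A : Set (Fin n → ℝ)) (hAe : IsEdgeOf n K A) (hAu : ¬ IsBounded A)
    (hAp : A ∩ {x | L x + c = 0} = {p}) :
    ∃ (M : (Fin n → ℝ) →ₗ[ℝ] ℝ) (e : ℝ), M ≠ 0 ∧
      (affineSpan ℝ (W ∪ A) : Set (Fin n → ℝ)) = {x | M x = e} ∧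
      (∀ x ∈ K, M x ≤ e) ∧ (K ∩ {x | M x = e}).Nonempty := by
  classical
  obtain ⟨m, Li, ci, hLine, hKeq⟩ := hpoly
  have hKconv : Convex ℝ K := by rw [hKeq]; exact polyAux_convex Li ci
  have hKclosed : IsClosed K := by rw [hKeq]; exact polyAux_closed Li ci
  obtain ⟨⟨f, b, hf0, hfne, hfle, hAeq⟩, hAdim⟩ := hAe
  have hAK : A ⊆ K := by rw [hAeq]; exact Set.inter_subset_left
  have hpAPi : p ∈ A ∩ {x | L x + c = 0} := by rw [hAp]; rfl
  have hpA : p ∈ A := hpAPi.1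
  have hpPi : L p + c = 0 := hpAPi.2
  have hpWmem := hpW
  rw [hW] at hpWmem
  have hpg : g p + d = 0 := hpWmem.2
  have hAconv : Convex ℝ A := by
    rw [hAeq]; exact hKconv.inter (convex_hyperplane f.isLinear b)
  have hAclosed : IsClosed A := by
    rw [hAeq]
    exact hKclosed.inter (isClosed_eq f.continuous_of_finiteDimensional continuous_const)
  -- A lies on a line through p with direction w₀
  have hdim1 : Module.finrank ℝ (affineSpan ℝ A).direction = 1 := hAdim
  obtain ⟨w₀, hw₀ne, hw₀gen⟩ := finrank_eq_one_iff'.mp hdim1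
  have hw₀0 : (w₀ : Fin n → ℝ) ≠ 0 := fun h => hw₀ne (Subtype.ext h)
  have hparam : ∀ x ∈ A, ∃ t : ℝ, x = p + t • (w₀ : Fin n → ℝ) := by
    intro x hx
    have hxs : x ∈ affineSpan ℝ A := subset_affineSpan ℝ A hx
    have hps : p ∈ affineSpan ℝ A := subset_affineSpan ℝ A hpA
    have hd' : x - p ∈ (affineSpan ℝ A).direction :=
      AffineSubspace.vsub_mem_direction hxs hps
    obtain ⟨t, ht⟩ := hw₀gen ⟨x - p, hd'⟩
    refine ⟨t, ?_⟩
    have h1 : t • (w₀ : Fin n → ℝ) = x - p := congrArg Subtype.val ht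
    rw [h1]; abel
  set T : Set ℝ := {t | p + t • (w₀ : Fin n → ℝ) ∈ A} with hT
  have hT0 : (0:ℝ) ∈ T := by
    show p + (0:ℝ) • (w₀ : Fin n → ℝ) ∈ A
    simpa using hpA
  have hTconv : Convex ℝ T := by
    intro s hs t ht a a' ha ha' haa
    have hmem := hAconv hs ht ha ha' haa
    show p + (a * s + a' * t) • (w₀ : Fin n → ℝ) ∈ A
    have heq : a • (p + s • (w₀:Fin n → ℝ)) + a' • (p + t • (w₀:Fin n → ℝ))
        = (a + a') • p + (a * s + a' * t) • (w₀:Fin n → ℝ) := by module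
    rw [heq, haa, one_smul] at hmem
    exact hmem
  have hTclosed : IsClosed T := by
    have hcont : Continuous fun t : ℝ => p + t • (w₀:Fin n → ℝ) :=
      continuous_const.add (continuous_id.smul continuous_const)
    exact hAclosed.preimage hcont
  have hTnb : ¬ (BddBelow T ∧ BddAbove T) := by
    rintro ⟨⟨a, ha⟩, ⟨a', ha'⟩⟩
    apply hAu
    have hsub : A ⊆ Metric.closedBall p ((|a| + |a'|) * ‖(w₀:Fin n → ℝ)‖) := by
      intro x hx
      obtain ⟨t, ht⟩ := hparam x hx
      have htT : t ∈ T := by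
        show p + t • (w₀:Fin n → ℝ) ∈ A
        rw [← ht]; exact hx
      have h1 : a ≤ t := ha htT
      have h2 : t ≤ a' := ha' htT
      rw [Metric.mem_closedBall, dist_eq_norm, ht]
      have h3 : p + t • (w₀:Fin n → ℝ) - p = t • (w₀:Fin n → ℝ) := by abel
      rw [h3, norm_smul, Real.norm_eq_abs]
      have h4 : |t| ≤ |a| + |a'| := by
        rcases le_or_gt 0 t with h | h
        · have : t ≤ |a'| := le_trans h2 (le_abs_self _)
          have := abs_of_nonneg h
          have := abs_nonneg a
          linarith
        · have : -t ≤ |a| := le_trans (by linarith) (neg_le_abs a)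
          have := abs_of_neg h
          have := abs_nonneg a'
          linarith
      exact mul_le_mul_of_nonneg_right h4 (norm_nonneg _)
    exact Metric.isBounded_closedBall.subset hsub
  have hline : ¬ (¬ BddBelow T ∧ ¬ BddAbove T) := by
    rintro ⟨hbb, hba⟩
    have hTuniv : ∀ t : ℝ, t ∈ T := by
      intro t
      obtain ⟨t₁, ht₁T, ht₁⟩ := not_bddBelow_iff.mp hbb t
      obtain ⟨t₂, ht₂T, ht₂⟩ := not_bddAbove_iff.mp hba t
      exact hTconv.ordConnected.out ht₁T ht₂T ⟨le_of_lt ht₁, le_of_lt ht₂⟩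
    have hLi0 : ∀ i, Li i (w₀:Fin n → ℝ) = 0 := by
      intro i
      by_contra hne
      set t : ℝ := (ci i - Li i p + 1) / (Li i (w₀:Fin n → ℝ)) with htdef
      have hmem : p + t • (w₀:Fin n → ℝ) ∈ K := hAK (hTuniv t)
      rw [hKeq, Set.mem_setOf_eq] at hmem
      have h5 := hmem i
      rw [map_add, map_smul, smul_eq_mul, htdef, div_mul_cancel₀ _ hne] at h5
      linarith
    obtain ⟨v₀, hv₀⟩ := hnd
    obtain ⟨f₀, b₀, hf₀0, hf₀ne, hf₀le, hv₀eq⟩ := hv₀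
    have hv₀mem : v₀ ∈ K ∩ {x | f₀ x = b₀} := by rw [← hv₀eq]; rfl
    have hKtrans : ∀ x ∈ K, ∀ s : ℝ, x + s • (w₀:Fin n → ℝ) ∈ K := by
      intro x hx s
      rw [hKeq, Set.mem_setOf_eq] at hx ⊢
      intro i
      rw [map_add, map_smul, smul_eq_mul, hLi0 i, mul_zero, add_zero]
      exact hx i
    have h1 : v₀ + (w₀:Fin n → ℝ) ∈ K := by
      have := hKtrans _ hv₀mem.1 1
      rwa [one_smul] at this
    have h2 : v₀ - (w₀:Fin n → ℝ) ∈ K := by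
      have := hKtrans _ hv₀mem.1 (-1)
      rwa [neg_one_smul, ← sub_eq_add_neg] at this
    have hf₀w : f₀ (w₀:Fin n → ℝ) = 0 := by
      have ha1 := hf₀le _ h1
      have ha2 := hf₀le _ h2
      rw [map_add] at ha1
      rw [map_sub] at ha2
      have hb : f₀ v₀ = b₀ := hv₀mem.2
      linarith
    have hsing : v₀ + (w₀:Fin n → ℝ) ∈ ({v₀} : Set (Fin n → ℝ)) := by
      rw [hv₀eq]
      refine ⟨h1, ?_⟩
      show f₀ (v₀ + (w₀:Fin n → ℝ)) = b₀
      rw [map_add, hf₀w, add_zero]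
      exact hv₀mem.2
    rw [Set.mem_singleton_iff] at hsing
    exact hw₀0 (by
      have := hsing
      have h7 : (w₀:Fin n → ℝ) = v₀ + (w₀:Fin n → ℝ) - v₀ := by abel
      rw [h7, this, sub_self])
  -- A is a ray q + ℝ≥0 w
  obtain ⟨q, w, hwne, hqA, hAray⟩ :
      ∃ q w, w ≠ 0 ∧ q ∈ A ∧ A = {x | ∃ t : ℝ, 0 ≤ t ∧ x = q + t • w} := by
    by_cases hba : BddAbove T
    · have hbb : ¬ BddBelow T := fun h => hTnb ⟨h, hba⟩
      set m₀ := sSup T with hm₀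
      have hm₀T : m₀ ∈ T := hTclosed.csSup_mem ⟨0, hT0⟩ hba
      have hTeq : T = Set.Iic m₀ := by
        apply Set.Subset.antisymm
        · exact fun t ht => le_csSup hba ht
        · intro t ht
          obtain ⟨t₁, ht₁T, ht₁⟩ := not_bddBelow_iff.mp hbb t
          exact hTconv.ordConnected.out ht₁T hm₀T ⟨le_of_lt ht₁, ht⟩
      refine ⟨p + m₀ • (w₀:Fin n → ℝ), -(w₀:Fin n → ℝ), neg_ne_zero.mpr hw₀0, hm₀T, ?_⟩
      ext x
      constructor
      · intro hx
        obtain ⟨t, ht⟩ := hparam x hx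
        have htT : t ∈ T := by
          show p + t • (w₀:Fin n → ℝ) ∈ A
          rw [← ht]; exact hx
        refine ⟨m₀ - t, ?_, ?_⟩
        · rw [hTeq] at htT
          simp only [Set.mem_Iic] at htT
          linarith
        · rw [ht]; module
      · rintro ⟨t, ht0, rfl⟩
        have hmemT : m₀ - t ∈ T := by
          rw [hTeq]
          simp only [Set.mem_Iic]
          linarith
        have hmem : p + (m₀ - t) • (w₀:Fin n → ℝ) ∈ A := hmemT
        have heq : p + m₀ • (w₀:Fin n → ℝ) + t • -(w₀:Fin n → ℝ)
            = p + (m₀ - t) • (w₀:Fin n → ℝ) := by module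
        rw [heq]
        exact hmem
    · have hbb : BddBelow T := by
        by_contra h; exact hline ⟨h, hba⟩
      set m₀ := sInf T with hm₀
      have hm₀T : m₀ ∈ T := hTclosed.csInf_mem ⟨0, hT0⟩ hbb
      have hTeq : T = Set.Ici m₀ := by
        apply Set.Subset.antisymm
        · exact fun t ht => csInf_le hbb ht
        · intro t ht
          obtain ⟨t₂, ht₂T, ht₂⟩ := not_bddAbove_iff.mp hba t
          exact hTconv.ordConnected.out hm₀T ht₂T ⟨ht, le_of_lt ht₂⟩
      refine ⟨p + m₀ • (w₀:Fin n → ℝ), (w₀:Fin n → ℝ), hw₀0, hm₀T, ?_⟩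
      ext x
      constructor
      · intro hx
        obtain ⟨t, ht⟩ := hparam x hx
        have htT : t ∈ T := by
          show p + t • (w₀:Fin n → ℝ) ∈ A
          rw [← ht]; exact hx
        refine ⟨t - m₀, ?_, ?_⟩
        · rw [hTeq] at htT
          simp only [Set.mem_Ici] at htT
          linarith
        · rw [ht]; module
      · rintro ⟨t, ht0, rfl⟩
        have hmemT : m₀ + t ∈ T := by
          rw [hTeq]
          simp only [Set.mem_Ici]
          linarith
        have hmem : p + (m₀ + t) • (w₀:Fin n → ℝ) ∈ A := hmemT
        have heq : p + m₀ • (w₀:Fin n → ℝ) + t • (w₀:Fin n → ℝ)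
            = p + (m₀ + t) • (w₀:Fin n → ℝ) := by module
        rw [heq]
        exact hmem
  -- q is a vertex of K, hence L q + c < 0
  have hqK : q ∈ K := hAK hqA
  have hfq : f q = b := by
    have : q ∈ K ∩ {x | f x = b} := by rw [← hAeq]; exact hqA
    exact this.2
  have hext : ∀ x ∈ K, ∀ y ∈ K, x + y = q + q → x = y := by
    intro x hx y hy hxy
    have hfx : f x ≤ b := hfle x hx
    have hfy : f y ≤ b := hfle y hy
    have hsum : f x + f y = b + b := by
      have h := congrArg f hxy
      rw [map_add, map_add, hfq] at h
      exact h
    have hfx' : f x = b := by linarith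
    have hfy' : f y = b := by linarith
    have hxA : x ∈ A := by rw [hAeq]; exact ⟨hx, hfx'⟩
    have hyA : y ∈ A := by rw [hAeq]; exact ⟨hy, hfy'⟩
    rw [hAray] at hxA hyA
    obtain ⟨t₁, ht₁0, rfl⟩ := hxA
    obtain ⟨t₂, ht₂0, rfl⟩ := hyA
    have hsum2 : (t₁ + t₂) • w = 0 := by
      have h9 : (t₁ + t₂) • w = (q + t₁ • w) + (q + t₂ • w) - (q + q) := by module
      rw [h9, hxy, sub_self]
    have ht12 : t₁ + t₂ = 0 := by
      rcases smul_eq_zero.mp hsum2 with h | h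
      · exact h
      · exact absurd h hwne
    have ht₁z : t₁ = 0 := by linarith
    have ht₂z : t₂ = 0 := by linarith
    rw [ht₁z, ht₂z]
  have hKns : ¬ K ⊆ {q} := by
    intro hsub
    exact hAu ((Bornology.isBounded_singleton (x := q)).subset (hAK.trans hsub))
  have hqvert : IsVertexOf n K q := vertex_of_midpoint_extreme Li ci K hKeq q hqK hext hKns
  have hqlt : L q + c < 0 := hsaw2 q hqvert
  -- p = q + t₀ w with t₀ > 0, L w > 0
  obtain ⟨t₀, ht₀0, hpq⟩ : ∃ t₀ : ℝ, 0 ≤ t₀ ∧ p = q + t₀ • w := by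
    rw [hAray] at hpA; exact hpA
  have hkey : t₀ * L w = -(L q + c) := by
    have h := hpPi
    rw [hpq, map_add, map_smul, smul_eq_mul] at h
    linarith
  have hprod : 0 < t₀ * L w := by rw [hkey]; linarith
  have ht₀pos : 0 < t₀ := by
    rcases ht₀0.lt_or_eq with h | h
    · exact h
    · exfalso; rw [← h, zero_mul] at hprod; linarith
  have hLw : 0 < L w := by
    rcases mul_pos_iff.mp hprod with ⟨h1, h2⟩ | ⟨h1, h2⟩
    · exact h2
    · linarith
  -- the hyperplane functional
  set M : (Fin n → ℝ) →ₗ[ℝ] ℝ := (L w) • g - (g w) • L with hM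
  set e : ℝ := M p with he
  have hMapp : ∀ x, M x = L w * g x - g w * L x := by
    intro x
    rw [hM]
    simp [LinearMap.sub_apply, LinearMap.smul_apply, smul_eq_mul]
  have hMne : M ≠ 0 := by
    intro h0
    have hzero : (-(g w)) • L + (L w) • g = 0 := by
      refine LinearMap.ext fun x => ?_
      have h := hMapp x
      rw [h0] at h
      simp only [LinearMap.add_apply, LinearMap.smul_apply, LinearMap.zero_apply, smul_eq_mul] at h ⊢
      linarith
    have := (LinearIndependent.pair_iff.mp hind) _ _ hzero
    exact hLw.ne' this.2
  have hMw : M w = 0 := by rw [hMapp]; ring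
  have hMq : M q = e := by
    have h1 : M p = M q + t₀ * M w := by
      rw [hpq, map_add, map_smul, smul_eq_mul]
    rw [he, h1, hMw, mul_zero, add_zero]
  have hMA : ∀ x ∈ A, M x = e := by
    intro x hx
    rw [hAray] at hx
    obtain ⟨t, _, rfl⟩ := hx
    rw [map_add, map_smul, smul_eq_mul, hMw, mul_zero, add_zero, hMq]
  have hgp' : g p = -d := by linarith
  have hLp' : L p = -c := by linarith
  have heval : e = L w * (-d) - g w * (-c) := by rw [he, hMapp, hgp', hLp']
  have hMsub : ∀ x, M x - e = L w * (g x + d) - g w * (L x + c) := by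
    intro x
    rw [hMapp, heval]
    ring
  have hMW : ∀ x ∈ W, M x = e := by
    intro x hx
    rw [hW] at hx
    obtain ⟨h1, h2⟩ := hx
    have h3 := hMsub x
    have h4 : L w * (g x + d) - g w * (L x + c) = 0 := by
      rw [show g x + d = 0 from h2, show L x + c = 0 from h1]
      ring
    rw [h4] at h3
    linarith
  -- supporting inequality
  have hgen : ∀ z ∈ K, ∀ y₀ ∈ K, M y₀ = e → (L y₀ + c) * (L z + c) < 0 → M z ≤ e := by
    intro z hz y₀ hy₀K hy₀M hsign
    set β := L y₀ + c with hβ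
    set τ := L z + c with hτ
    have hβτ : β - τ ≠ 0 := by
      intro h
      rcases mul_neg_iff.mp hsign with ⟨h1, h2⟩ | ⟨h1, h2⟩ <;> nlinarith
    set μ := β / (β - τ) with hμ
    have hμc : μ * (β - τ) = β := div_mul_cancel₀ _ hβτ
    have hμ0 : 0 < μ := by
      rcases mul_neg_iff.mp hsign with ⟨h1, h2⟩ | ⟨h1, h2⟩
      · exact div_pos h1 (by linarith)
      · rw [hμ]
        apply div_pos_of_neg_of_neg h1 (by linarith)
    have hμ1 : μ < 1 := by
      rcases mul_neg_iff.mp hsign with ⟨h1, h2⟩ | ⟨h1, h2⟩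
      · rw [hμ, div_lt_one (by linarith)]
        linarith
      · have h3 : β - τ < 0 := by linarith
        rw [hμ]
        rw [div_lt_one_iff]
        right; right
        exact ⟨h3, by linarith⟩
    set y := μ • z + (1 - μ) • y₀ with hy
    have hyK : y ∈ K := hKconv hz hy₀K (le_of_lt hμ0) (by linarith) (by ring)
    have hLy : L y = μ * L z + (1 - μ) * L y₀ := by
      rw [hy, map_add, map_smul, map_smul, smul_eq_mul, smul_eq_mul]
    have hyPi : L y + c = 0 := by
      rw [hLy]
      have h5 : μ * L z + (1 - μ) * L y₀ + c = β - μ * (β - τ) := by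
        rw [hβ, hτ]; ring
      rw [h5, hμc, sub_self]
    have hyP : g y + d ≤ 0 := hside y ⟨hyK, hyPi⟩
    have hyM : M y - e = L w * (g y + d) := by
      rw [hMsub, hyPi]
      ring
    have hyM2 : M y - e = μ * (M z - e) := by
      have h6 : M y = μ * M z + (1 - μ) * e := by
        rw [hy, map_add, map_smul, map_smul, smul_eq_mul, smul_eq_mul, hy₀M]
      rw [h6]; ring
    have hfin : μ * (M z - e) ≤ 0 := by
      rw [← hyM2, hyM]
      have := mul_nonneg (le_of_lt hLw) (neg_nonneg.mpr hyP)
      nlinarith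
    by_contra hcon
    push_neg at hcon
    nlinarith [mul_pos hμ0 (sub_pos.mpr hcon)]
  have hsupp : ∀ z ∈ K, M z ≤ e := by
    intro z hz
    rcases lt_trichotomy (L z + c) 0 with hτ0 | hτ0 | hτ0
    · -- below the sawing hyperplane: use a far point of A
      set σ := -(L q + c) with hσ
      have hσpos : 0 < σ := by rw [hσ]; linarith
      set bpt := q + ((σ + 1)/(L w)) • w with hbpt
      have hbA : bpt ∈ A := by
        rw [hAray]
        exact ⟨(σ + 1)/(L w), by positivity, rfl⟩
      have hbK : bpt ∈ K := hAK hbA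
      have hbβ : L bpt + c = 1 := by
        rw [hbpt, map_add, map_smul, smul_eq_mul, div_mul_cancel₀ _ hLw.ne']
        rw [hσ] at *
        linarith
      have hbM : M bpt = e := hMA _ hbA
      apply hgen z hz bpt hbK hbM
      rw [hbβ, one_mul]
      exact hτ0
    · have hzd := hside z ⟨hz, hτ0⟩
      have h7 := hMsub z
      rw [hτ0, mul_zero, sub_zero] at h7
      nlinarith
    · apply hgen z hz q hqK hMq
      exact mul_neg_of_neg_of_pos hqlt hτ0
  -- the affine span equality
  have hWsub : W ⊆ (affineSpan ℝ (W ∪ A) : Set (Fin n → ℝ)) :=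
    Set.Subset.trans Set.subset_union_left (subset_affineSpan ℝ _)
  have hAsub : A ⊆ (affineSpan ℝ (W ∪ A) : Set (Fin n → ℝ)) :=
    Set.Subset.trans Set.subset_union_right (subset_affineSpan ℝ _)
  have hspan : (affineSpan ℝ (W ∪ A) : Set (Fin n → ℝ)) = {x | M x = e} := by
    apply Set.Subset.antisymm
    · have hle' : affineSpan ℝ (W ∪ A) ≤ AffineSubspace.mk' p (LinearMap.ker M) := by
        rw [affineSpan_le]
        intro x hx
        have hMx : M x = e := by
          rcases hx with hx | hx
          · exact hMW x hx
          · exact hMA x hx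
        rw [AffineSubspace.mem_coe, AffineSubspace.mem_mk', LinearMap.mem_ker]
        show M (x - p) = 0
        rw [map_sub, hMx, ← he, sub_self]
      intro x hx
      have h8 : M (x - p) = 0 := AffineSubspace.mem_mk'.mp (hle' hx)
      rw [map_sub] at h8
      show M x = e
      rw [he]
      linarith
    · intro x hx
      have hMx : M x = e := hx
      set t := (L x + c) / (L w) with htdef
      set zvec : Fin n → ℝ := x - p - t • w with hzvec
      have hLz : L zvec = 0 := by
        rw [hzvec, map_sub, map_sub, map_smul, smul_eq_mul, htdef,
          div_mul_cancel₀ _ hLw.ne', hLp']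
        ring
      have hgz : g zvec = 0 := by
        have h1 : L w * (g x + d) = g w * (L x + c) := by
          have h2 := hMsub x
          rw [hMx, sub_self] at h2
          linarith
        have h2 : L w * g zvec = 0 := by
          rw [hzvec, map_sub, map_sub, map_smul, smul_eq_mul, htdef, hgp']
          field_simp
          linarith
        rcases mul_eq_zero.mp h2 with h | h
        · exact absurd h hLw.ne'
        · exact h
      have hpz : p + zvec ∈ W := by
        rw [hW]
        constructor
        · show L (p + zvec) + c = 0
          rw [map_add, hLz, add_zero]
          exact hpPi
        · show g (p + zvec) + d = 0
          rw [map_add, hgz, add_zero]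
          exact hpg
      have hdir : w ∈ (affineSpan ℝ (W ∪ A)).direction := by
        have h1 : p ∈ affineSpan ℝ (W ∪ A) := hWsub hpW
        have h2 : q ∈ affineSpan ℝ (W ∪ A) := hAsub hqA
        have h3 : p - q ∈ (affineSpan ℝ (W ∪ A)).direction :=
          AffineSubspace.vsub_mem_direction h1 h2
        have h4 : p - q = t₀ • w := by rw [hpq]; abel
        rw [h4] at h3
        have h5 := Submodule.smul_mem _ t₀⁻¹ h3
        rwa [smul_smul, inv_mul_cancel₀ ht₀pos.ne', one_smul] at h5
      have hx' : x = t • w + (p + zvec) := by rw [hzvec]; abel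
      have hmem : t • w + (p + zvec) ∈ affineSpan ℝ (W ∪ A) :=
        AffineSubspace.vadd_mem_of_mem_direction (Submodule.smul_mem _ t hdir) (hWsub hpz)
      rw [hx']
      exact hmem
  exact ⟨M, e, hMne, hspan, hsupp, ⟨p, hAK hpA, he.symm ▸ rfl⟩⟩
end

section
/- Let K ⊂ ℝ^n be an n-dimensional non-degenerate unbounded convex polyhedron in FU-position with respect to ker(ĥ), and suppose its recession cone rec(K) has nonempty topological interior. Let v be an interior point of rec(K) and let G ⊂ ℝ^n be a finite set. Then there exists an affine-linear function h with linear part ĥ such that, setting Π := {h = 0}, for every p ∈ G the set {p + t·v : t ≥ 0} ∩ (K ∩ Π) is a singleton. -/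
open Bornology Pointwise

section AuxWalk

private lemma memV_iff {n m : ℕ} (A : Fin m → ((Fin n → ℝ) →ₗ[ℝ] ℝ)) (P : Fin m → Prop)
    (y : Fin n → ℝ) :
    (y ∈ ⨅ (i : Fin m) (_ : P i), LinearMap.ker (A i)) ↔ ∀ i, P i → A i y = 0 := by
  simp [Submodule.mem_iInf, LinearMap.mem_ker]

private lemma tight_of_sum_eq {m : ℕ} (T : Finset (Fin m)) (f g : Fin m → ℝ)
    (hle : ∀ i ∈ T, f i ≤ g i) (hsum : ∑ i ∈ T, f i = ∑ i ∈ T, g i) :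
    ∀ i ∈ T, f i = g i := by
  have h : ∀ i ∈ T, g i - f i = 0 := by
    rw [← Finset.sum_eq_zero_iff_of_nonneg (fun i hi => sub_nonneg.mpr (hle i hi))]
    rw [Finset.sum_sub_distrib, hsum, sub_self]
  intro i hi
  have := h i hi
  linarith

private lemma cone_walk {n m : ℕ} (A : Fin m → ((Fin n → ℝ) →ₗ[ℝ] ℝ))
    (L : (Fin n → ℝ) →ₗ[ℝ] ℝ)
    (pointed : ∀ z : Fin n → ℝ, (∀ i, A i z ≤ 0) → (∀ i, A i (-z) ≤ 0) → z = 0) :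
    ∀ k : ℕ, ∀ u : Fin n → ℝ,
      Module.finrank ℝ ↥(⨅ (i : Fin m) (_ : A i u = 0), LinearMap.ker (A i)) ≤ k →
      (∀ i, A i u ≤ 0) → L u < 0 →
      ∃ w : Fin n → ℝ, (∀ i, A i w ≤ 0) ∧ L w < 0 ∧
        (∀ y : Fin n → ℝ, (∀ i, A i w = 0 → A i y = 0) → ∃ r : ℝ, y = r • w) := by
  intro k
  induction k with
  | zero =>
    intro u hk hu hLu
    by_cases hdone : ∀ y : Fin n → ℝ, (∀ i, A i u = 0 → A i y = 0) → ∃ r : ℝ, y = r • u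
    · exact ⟨u, hu, hLu, hdone⟩
    · exfalso
      push_neg at hdone
      obtain ⟨y, hy, hyr⟩ := hdone
      set d := (L y) • u - (L u) • y with hd
      have hdV : ∀ i, A i u = 0 → A i d = 0 := by
        intro i hi
        simp [hd, map_sub, map_smul, smul_eq_mul, hi, hy i hi]
      have hd0 : d ≠ 0 := by
        intro h
        apply hyr ((L u)⁻¹ * (L y))
        have h2 : (L y) • u = (L u) • y := by rwa [sub_eq_zero] at h
        calc y = (L u)⁻¹ • ((L u) • y) := by rw [inv_smul_smul₀ (ne_of_lt hLu)]
          _ = (L u)⁻¹ • ((L y) • u) := by rw [h2]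
          _ = ((L u)⁻¹ * (L y)) • u := by rw [smul_smul]
      have hmem : d ∈ ⨅ (i : Fin m) (_ : A i u = 0), LinearMap.ker (A i) :=
        (memV_iff A _ d).mpr hdV
      have h1 : 1 ≤ Module.finrank ℝ ↥(⨅ (i : Fin m) (_ : A i u = 0), LinearMap.ker (A i)) := by
        have hle : Submodule.span ℝ {d} ≤ ⨅ (i : Fin m) (_ : A i u = 0), LinearMap.ker (A i) :=
          Submodule.span_le.mpr (Set.singleton_subset_iff.mpr hmem)
        calc 1 = Module.finrank ℝ ↥(Submodule.span ℝ {d}) := (finrank_span_singleton hd0).symm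
          _ ≤ _ := Submodule.finrank_mono hle
      omega
  | succ k ih =>
    intro u hk hu hLu
    by_cases hdone : ∀ y : Fin n → ℝ, (∀ i, A i u = 0 → A i y = 0) → ∃ r : ℝ, y = r • u
    · exact ⟨u, hu, hLu, hdone⟩
    push_neg at hdone
    obtain ⟨y, hy, hyr⟩ := hdone
    classical
    have key : ∀ e : Fin n → ℝ, (∀ i, A i u = 0 → A i e = 0) → L e = 0 →
        (∃ i, 0 < A i e) →
        ∃ w : Fin n → ℝ, (∀ i, A i w ≤ 0) ∧ L w < 0 ∧
          (∀ y : Fin n → ℝ, (∀ i, A i w = 0 → A i y = 0) → ∃ r : ℝ, y = r • w) := by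
      intro e heV hLe hex
      obtain ⟨i₁, hi₁⟩ := hex
      set J : Finset (Fin m) := Finset.univ.filter (fun i => 0 < A i e) with hJ
      have hi₁J : i₁ ∈ J := by simp [hJ, hi₁]
      have hJne : J.Nonempty := ⟨i₁, hi₁J⟩
      have hJpos : ∀ i ∈ J, 0 < A i e := fun i hi => (Finset.mem_filter.mp hi).2
      set s := J.inf' hJne (fun i => -(A i u) / A i e) with hs
      have hspos : 0 < s := by
        rw [hs, Finset.lt_inf'_iff]
        intro i hiJ
        have hAd := hJpos i hiJ
        have hAu : A i u < 0 := by
          rcases lt_or_eq_of_le (hu i) with h | h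
          · exact h
          · exfalso; rw [heV i h] at hAd; exact lt_irrefl 0 hAd
        exact div_pos (by linarith) hAd
      obtain ⟨j₀, hj₀J, hj₀⟩ := Finset.exists_mem_eq_inf' hJne (fun i => -(A i u) / A i e)
      set w := u + s • e with hw
      have hwapp : ∀ i, A i w = A i u + s * A i e := by
        intro i; rw [hw, map_add, map_smul, smul_eq_mul]
      have hwA : ∀ i, A i w ≤ 0 := by
        intro i
        rw [hwapp i]
        rcases le_or_gt (A i e) 0 with h | h
        · have hmn : s * A i e ≤ 0 := mul_nonpos_iff.mpr (Or.inl ⟨le_of_lt hspos, h⟩)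
          linarith [hu i]
        · have hiJ : i ∈ J := by simp [hJ, h]
          have hle : s ≤ -(A i u) / A i e := by
            rw [hs]; exact Finset.inf'_le _ hiJ
          rw [le_div_iff₀ h] at hle
          linarith
      have hj₀e : A j₀ e ≠ 0 := ne_of_gt (hJpos j₀ hj₀J)
      have hj₀w : A j₀ w = 0 := by
        have hsj : s = -(A j₀ u) / A j₀ e := hs.trans hj₀
        rw [hwapp j₀, hsj, div_mul_cancel₀ _ hj₀e]
        ring
      have hwL : L w < 0 := by
        rw [hw, map_add, map_smul, smul_eq_mul, hLe, mul_zero, add_zero]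
        exact hLu
      have hVle : (⨅ (i : Fin m) (_ : A i w = 0), LinearMap.ker (A i)) ≤
          (⨅ (i : Fin m) (_ : A i u = 0), LinearMap.ker (A i)) := by
        intro z hz
        rw [memV_iff] at hz ⊢
        intro i hi
        exact hz i (by rw [hwapp i, hi, heV i hi, mul_zero, add_zero])
      have hVlt : (⨅ (i : Fin m) (_ : A i w = 0), LinearMap.ker (A i)) <
          (⨅ (i : Fin m) (_ : A i u = 0), LinearMap.ker (A i)) := by
        rw [SetLike.lt_iff_le_and_exists]
        refine ⟨hVle, e, (memV_iff A _ e).mpr heV, ?_⟩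
        rw [memV_iff]
        push_neg
        exact ⟨j₀, hj₀w, hj₀e⟩
      have hrank := Submodule.finrank_lt_finrank_of_lt hVlt
      exact ih w (by omega) hwA hwL
    set d := (L y) • u - (L u) • y with hd
    have hdV : ∀ i, A i u = 0 → A i d = 0 := by
      intro i hi
      simp [hd, map_sub, map_smul, smul_eq_mul, hi, hy i hi]
    have hLd : L d = 0 := by
      rw [hd, map_sub, map_smul, map_smul, smul_eq_mul, smul_eq_mul]
      ring
    have hd0 : d ≠ 0 := by
      intro h
      apply hyr ((L u)⁻¹ * (L y))
      have h2 : (L y) • u = (L u) • y := by rwa [sub_eq_zero] at h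
      calc y = (L u)⁻¹ • ((L u) • y) := by rw [inv_smul_smul₀ (ne_of_lt hLu)]
        _ = (L u)⁻¹ • ((L y) • u) := by rw [h2]
        _ = ((L u)⁻¹ * (L y)) • u := by rw [smul_smul]
    by_cases hex : ∃ i, 0 < A i d
    · exact key d hdV hLd hex
    · push_neg at hex
      have hne : ∃ i, A i d ≠ 0 := by
        by_contra hno
        push_neg at hno
        exact hd0 (pointed d (fun i => le_of_eq (hno i))
          (fun i => by rw [map_neg, hno i, neg_zero]))
      obtain ⟨i₂, hi₂⟩ := hne
      have hi₂' : 0 < A i₂ (-d) := by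
        rw [map_neg]
        have := lt_of_le_of_ne (hex i₂) hi₂
        linarith
      exact key (-d) (fun i hi => by rw [map_neg, hdV i hi, neg_zero])
        (by rw [map_neg, hLd, neg_zero]) ⟨i₂, hi₂'⟩

private lemma tighten_walk {n m : ℕ} (A : Fin m → ((Fin n → ℝ) →ₗ[ℝ] ℝ)) (cs : Fin m → ℝ)
    (u : Fin n → ℝ) (hu : ∀ i, A i u ≤ 0) :
    ∀ k : ℕ, ∀ x : Fin n → ℝ,
      Module.finrank ℝ ↥(⨅ (i : Fin m) (_ : A i u = 0 ∧ A i x = cs i), LinearMap.ker (A i)) ≤ k →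
      (∀ i, A i x ≤ cs i) →
      ∃ x₁ : Fin n → ℝ, (∀ i, A i x₁ ≤ cs i) ∧
        ∀ y : Fin n → ℝ, (∀ i, A i u = 0 ∧ A i x₁ = cs i → A i y = 0) →
          ∀ i, A i u = 0 → A i y = 0 := by
  intro k
  induction k with
  | zero =>
    intro x hk hx
    by_cases hdone : ∀ y : Fin n → ℝ, (∀ i, A i u = 0 ∧ A i x = cs i → A i y = 0) →
        ∀ i, A i u = 0 → A i y = 0
    · exact ⟨x, hx, hdone⟩
    · exfalso
      push_neg at hdone
      obtain ⟨y, hy, i₁, hi₁u, hi₁y⟩ := hdone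
      have hy0 : y ≠ 0 := by intro h; rw [h, map_zero] at hi₁y; exact hi₁y rfl
      have hmem : y ∈ ⨅ (i : Fin m) (_ : A i u = 0 ∧ A i x = cs i), LinearMap.ker (A i) :=
        (memV_iff A _ y).mpr hy
      have h1 : 1 ≤ Module.finrank ℝ
          ↥(⨅ (i : Fin m) (_ : A i u = 0 ∧ A i x = cs i), LinearMap.ker (A i)) := by
        have hle : Submodule.span ℝ {y} ≤
            ⨅ (i : Fin m) (_ : A i u = 0 ∧ A i x = cs i), LinearMap.ker (A i) :=
          Submodule.span_le.mpr (Set.singleton_subset_iff.mpr hmem)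
        calc 1 = Module.finrank ℝ ↥(Submodule.span ℝ {y}) := (finrank_span_singleton hy0).symm
          _ ≤ _ := Submodule.finrank_mono hle
      omega
  | succ k ih =>
    intro x hk hx
    by_cases hdone : ∀ y : Fin n → ℝ, (∀ i, A i u = 0 ∧ A i x = cs i → A i y = 0) →
        ∀ i, A i u = 0 → A i y = 0
    · exact ⟨x, hx, hdone⟩
    push_neg at hdone
    obtain ⟨y, hy, i₁, hi₁u, hi₁y⟩ := hdone
    classical
    have key : ∀ e : Fin n → ℝ, (∀ i, A i u = 0 ∧ A i x = cs i → A i e = 0) →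
        (∃ i, A i u = 0 ∧ 0 < A i e) →
        ∃ x₁ : Fin n → ℝ, (∀ i, A i x₁ ≤ cs i) ∧
          ∀ y : Fin n → ℝ, (∀ i, A i u = 0 ∧ A i x₁ = cs i → A i y = 0) →
            ∀ i, A i u = 0 → A i y = 0 := by
      intro e he hex
      obtain ⟨j₁, hj₁u, hj₁e⟩ := hex
      set J : Finset (Fin m) := Finset.univ.filter (fun i => A i u = 0 ∧ 0 < A i e) with hJ
      have hj₁J : j₁ ∈ J := by simp [hJ, hj₁u, hj₁e]
      have hJne : J.Nonempty := ⟨j₁, hj₁J⟩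
      have hJprop : ∀ i ∈ J, A i u = 0 ∧ 0 < A i e := fun i hi => (Finset.mem_filter.mp hi).2
      set s := J.inf' hJne (fun i => (cs i - A i x) / A i e) with hs
      have hspos : 0 < s := by
        rw [hs, Finset.lt_inf'_iff]
        intro i hiJ
        obtain ⟨hiu, hie⟩ := hJprop i hiJ
        have hlt : A i x < cs i := by
          rcases lt_or_eq_of_le (hx i) with h | h
          · exact h
          · exfalso; rw [he i ⟨hiu, h⟩] at hie; exact lt_irrefl 0 hie
        exact div_pos (by linarith) hie
      obtain ⟨j₀, hj₀J, hj₀⟩ := Finset.exists_mem_eq_inf' hJne (fun i => (cs i - A i x) / A i e)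
      obtain ⟨M, hM⟩ := (Finset.univ.image
        (fun j => (A j x + s * A j e - cs j) / (-(A j u)))).bddAbove
      set t := max M 0 with htdef
      have ht0 : (0:ℝ) ≤ t := le_max_right _ _
      set x' := x + t • u + s • e with hx'
      have hx'app : ∀ i, A i x' = A i x + t * A i u + s * A i e := by
        intro i; rw [hx', map_add, map_add, map_smul, map_smul, smul_eq_mul, smul_eq_mul]
      have hx'K : ∀ i, A i x' ≤ cs i := by
        intro i
        rw [hx'app i]
        rcases lt_or_eq_of_le (hu i) with h | h
        · have hmem : (A i x + s * A i e - cs i) / (-(A i u)) ∈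
              (Finset.univ.image (fun j => (A j x + s * A j e - cs j) / (-(A j u)))) :=
            Finset.mem_image_of_mem _ (Finset.mem_univ i)
          have hle : (A i x + s * A i e - cs i) / (-(A i u)) ≤ t :=
            le_trans (hM hmem) (le_max_left _ _)
          rw [div_le_iff₀ (by linarith : (0:ℝ) < -(A i u))] at hle
          nlinarith
        · rcases le_or_gt (A i e) 0 with h2 | h2
          · have hmn : s * A i e ≤ 0 := mul_nonpos_iff.mpr (Or.inl ⟨le_of_lt hspos, h2⟩)
            rw [h, mul_zero, add_zero]
            linarith [hx i]
          · have hiJ : i ∈ J := by simp [hJ, h, h2]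
            have hle : s ≤ (cs i - A i x) / A i e := by
              rw [hs]; exact Finset.inf'_le _ hiJ
            rw [le_div_iff₀ h2] at hle
            rw [h, mul_zero, add_zero]
            linarith
      obtain ⟨hj₀u, hj₀e⟩ := hJprop j₀ hj₀J
      have hj₀tight : A j₀ x' = cs j₀ := by
        have hsj : s = (cs j₀ - A j₀ x) / A j₀ e := hs.trans hj₀
        rw [hx'app j₀, hj₀u, mul_zero, add_zero, hsj, div_mul_cancel₀ _ (ne_of_gt hj₀e)]
        ring
      have hVle : (⨅ (i : Fin m) (_ : A i u = 0 ∧ A i x' = cs i), LinearMap.ker (A i)) ≤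
          (⨅ (i : Fin m) (_ : A i u = 0 ∧ A i x = cs i), LinearMap.ker (A i)) := by
        intro z hz
        rw [memV_iff] at hz ⊢
        intro i hi
        apply hz i
        refine ⟨hi.1, ?_⟩
        rw [hx'app i, hi.1, mul_zero, add_zero, he i hi, mul_zero, add_zero]
        exact hi.2
      have hVlt : (⨅ (i : Fin m) (_ : A i u = 0 ∧ A i x' = cs i), LinearMap.ker (A i)) <
          (⨅ (i : Fin m) (_ : A i u = 0 ∧ A i x = cs i), LinearMap.ker (A i)) := by
        rw [SetLike.lt_iff_le_and_exists]
        refine ⟨hVle, e, (memV_iff A _ e).mpr he, ?_⟩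
        rw [memV_iff]
        push_neg
        exact ⟨j₀, ⟨hj₀u, hj₀tight⟩, ne_of_gt hj₀e⟩
      have hrank := Submodule.finrank_lt_finrank_of_lt hVlt
      exact ih x' (by omega) hx'K
    by_cases hex : ∃ i, A i u = 0 ∧ 0 < A i y
    · exact key y hy hex
    · push_neg at hex
      have hi₁' : 0 < A i₁ (-y) := by
        rw [map_neg]
        have := lt_of_le_of_ne (hex i₁ hi₁u) hi₁y
        linarith
      exact key (-y) (fun i hi => by rw [map_neg, hy i hi, neg_zero]) ⟨i₁, hi₁u, hi₁'⟩

private lemma fulldim_sum_ne_zero {n m : ℕ} (A : Fin m → ((Fin n → ℝ) →ₗ[ℝ] ℝ)) (cs : Fin m → ℝ)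
    (hA : ∀ i, A i ≠ 0) (K : Set (Fin n → ℝ)) (hKeq : K = {x | ∀ i, A i x ≤ cs i})
    (hdim : Module.finrank ℝ (affineSpan ℝ K).direction = n) :
    ∀ T : Finset (Fin m), T.Nonempty → ∀ x : Fin n → ℝ, (∀ i, A i x ≤ cs i) →
      (∀ i ∈ T, A i x = cs i) → (∑ i ∈ T, A i) ≠ 0 := by
  intro T hT x hx hxt h0
  have happ : ∀ y : Fin n → ℝ, (∑ i ∈ T, A i) y = ∑ i ∈ T, A i y := by
    intro y; rw [LinearMap.coe_sum, Finset.sum_apply]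
  have hzero : ∀ y : Fin n → ℝ, ∑ i ∈ T, A i y = 0 := by
    intro y
    rw [← happ, h0]
    rfl
  have hsumc : ∑ i ∈ T, cs i = 0 := by
    rw [← Finset.sum_congr rfl hxt]
    exact hzero x
  have hkey : ∀ y : Fin n → ℝ, (∀ i, A i y ≤ cs i) → ∀ i ∈ T, A i y = cs i := by
    intro y hy
    apply tight_of_sum_eq T (fun i => A i y) cs (fun i _ => hy i)
    rw [hzero y, hsumc]
  obtain ⟨i₀, hi₀⟩ := hT
  have hker : vectorSpan ℝ K ≤ LinearMap.ker (A i₀) := by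
    rw [vectorSpan_def]
    apply Submodule.span_le.mpr
    rintro z ⟨a, ha, b, hb, rfl⟩
    have ha' : ∀ i, A i a ≤ cs i := by rw [hKeq] at ha; exact ha
    have hb' : ∀ i, A i b ≤ cs i := by rw [hKeq] at hb; exact hb
    show A i₀ (a - b) = 0
    rw [map_sub, hkey a ha' i₀ hi₀, hkey b hb' i₀ hi₀, sub_self]
  have htop : vectorSpan ℝ K = ⊤ := by
    apply Submodule.eq_top_of_finrank_eq
    rw [← direction_affineSpan, hdim, Module.finrank_fin_fun]
  rw [htop, top_le_iff] at hker
  exact hA i₀ (LinearMap.ker_eq_top.mp hker)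

end AuxWalk

set_option maxHeartbeats 1000000 in
/-- Lemma 1.6: if `K` is an `n`-dimensional non-degenerate unbounded convex polyhedron
in FU-position with respect to `ker L`, its recession cone has nonempty interior,
`v` is an interior point of the recession cone and `G` is finite, then there is a
hyperplane `Π` parallel to `ker L` such that `(p + ℝ≥0·v) ∩ (K ∩ Π)` is a singleton
for every `p ∈ G`. -/
theorem exists_hyperplane_with_singleton_ray_intersections
    (n : ℕ) (K : Set (Fin n → ℝ))
    (hpoly : IsConvexPolyhedron n K) (hdim : polyDim n K = n)
    (hnd : ∃ p, IsVertexOf n K p) (hunb : ¬ IsBounded K)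
    (L : (Fin n → ℝ) →ₗ[ℝ] ℝ) (hL : L ≠ 0)
    (hFU : ∃ c₀ : ℝ,
      (∀ A : Set (Fin n → ℝ), IsEdgeOf n K A → ¬ IsBounded A →
        (A ∩ {x | L x + c₀ = 0}).Nonempty) ∧
      (∀ p, IsVertexOf n K p → L p + c₀ < 0))
    (v : Fin n → ℝ) (hv : v ∈ interior (recCone n K))
    (G : Set (Fin n → ℝ)) (hG : G.Finite) :
    ∃ c : ℝ, ∀ p ∈ G, ∃ z : Fin n → ℝ,
      {x | ∃ t : ℝ, 0 ≤ t ∧ x = p + t • v} ∩ (K ∩ {x | L x + c = 0}) = {z} := by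
  classical
  obtain ⟨m, A, cs, hA, hKeq⟩ := hpoly
  obtain ⟨c₀, hFU1, hFU2⟩ := hFU
  obtain ⟨p₀, hp₀⟩ := hnd
  have hmemK : ∀ x, x ∈ K ↔ ∀ i, A i x ≤ cs i := by
    intro x; rw [hKeq]; exact Iff.rfl
  have hp₀K : p₀ ∈ K := by
    obtain ⟨M, dM, hM0, hMne, hMle, hMeq⟩ := hp₀
    have h : p₀ ∈ K ∩ {x | M x = dM} := by rw [← hMeq]; exact rfl
    exact h.1
  -- the recession cone is the cone of the system
  have hrecC : ∀ w, w ∈ recCone n K ↔ ∀ i, A i w ≤ 0 := by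
    intro w
    constructor
    · intro hw i
      by_contra hpos
      push_neg at hpos
      have hp₀i : A i p₀ ≤ cs i := (hmemK p₀).mp hp₀K i
      have h1 : 0 ≤ (cs i - A i p₀) / A i w := div_nonneg (by linarith) (le_of_lt hpos)
      have ht0 : 0 ≤ (cs i - A i p₀) / A i w + 1 := by linarith
      have hmem := (hmemK _).mp (hw p₀ hp₀K _ ht0) i
      rw [map_add, map_smul, smul_eq_mul] at hmem
      have htw : ((cs i - A i p₀) / A i w + 1) * A i w = (cs i - A i p₀) + A i w := by
        rw [add_mul, one_mul, div_mul_cancel₀ _ (ne_of_gt hpos)]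
      rw [htw] at hmem
      linarith
    · intro hw x hx t ht0
      rw [hmemK] at hx ⊢
      intro i
      rw [map_add, map_smul, smul_eq_mul]
      have hmn : t * A i w ≤ 0 := mul_nonpos_iff.mpr (Or.inl ⟨ht0, hw i⟩)
      linarith [hx i]
  -- pointedness
  have pointed : ∀ z : Fin n → ℝ, (∀ i, A i z ≤ 0) → (∀ i, A i (-z) ≤ 0) → z = 0 := by
    intro z hz hz'
    by_contra hz0
    obtain ⟨M, dM, hM0, hMne, hMle, hMeq⟩ := hp₀
    have hMp₀ : M p₀ = dM := by
      have h : p₀ ∈ K ∩ {x | M x = dM} := by rw [← hMeq]; exact rfl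
      exact h.2
    have hmem1 : p₀ + z ∈ K := by
      rw [hmemK]; intro i; rw [map_add]; linarith [(hmemK p₀).mp hp₀K i, hz i]
    have hmem2 : p₀ + -z ∈ K := by
      rw [hmemK]; intro i; rw [map_add]; linarith [(hmemK p₀).mp hp₀K i, hz' i]
    have h1 : M (p₀ + z) < dM := by
      rcases lt_or_eq_of_le (hMle _ hmem1) with h | h
      · exact h
      · exfalso
        have hmem : p₀ + z ∈ K ∩ {x | M x = dM} := ⟨hmem1, h⟩
        rw [← hMeq, Set.mem_singleton_iff] at hmem
        exact hz0 (by have := hmem; rwa [add_eq_left] at this)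
    have h2 : M (p₀ + -z) < dM := by
      rcases lt_or_eq_of_le (hMle _ hmem2) with h | h
      · exact h
      · exfalso
        have hmem : p₀ + -z ∈ K ∩ {x | M x = dM} := ⟨hmem2, h⟩
        rw [← hMeq, Set.mem_singleton_iff] at hmem
        apply hz0
        have h3 : -z = 0 := by rwa [add_eq_left] at hmem
        simpa using congrArg Neg.neg h3
    rw [map_add] at h1 h2
    rw [map_neg] at h2
    linarith
  rw [mem_interior_iff_mem_nhds, Metric.mem_nhds_iff] at hv
  obtain ⟨ε, hε, hball⟩ := hv
  -- every constraint is strictly negative on v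
  have hAiv : ∀ i, A i v < 0 := by
    intro i
    obtain ⟨z₀, hz₀⟩ : ∃ z₀, A i z₀ ≠ 0 := by
      by_contra hno; push_neg at hno
      exact hA i (LinearMap.ext fun x => by rw [hno x]; rfl)
    obtain ⟨z, hzpos⟩ : ∃ z, 0 < A i z := by
      rcases lt_or_gt_of_ne hz₀ with h | h
      · exact ⟨-z₀, by rw [map_neg]; linarith⟩
      · exact ⟨z₀, h⟩
    set δ := ε / (2 * (‖z‖ + 1)) with hδ
    have hδpos : 0 < δ := div_pos hε (by positivity)
    have hmem : v + δ • z ∈ recCone n K := by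
      apply hball
      rw [Metric.mem_ball, dist_eq_norm, add_sub_cancel_left, norm_smul, Real.norm_eq_abs,
        abs_of_pos hδpos, hδ, div_mul_eq_mul_div, div_lt_iff₀ (by positivity)]
      nlinarith [norm_nonneg z]
    have hle := (hrecC _).mp hmem i
    rw [map_add, map_smul, smul_eq_mul] at hle
    nlinarith
  -- the key fact : L v ≠ 0
  have hLv : L v ≠ 0 := by
    intro hLv0
    rcases Nat.eq_zero_or_pos n with hn0 | hn1
    · apply hL
      apply LinearMap.ext
      intro x
      have hx : x = 0 := funext fun i => absurd i.2 (by omega)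
      simp [hx]
    have hv0 : v ≠ 0 := by
      intro hv00
      have hne : Nonempty (Fin n) := ⟨⟨0, hn1⟩⟩
      set z : Fin n → ℝ := fun _ => ε / 2 with hzdef
      have hznorm : ‖z‖ = ε / 2 := by
        rw [hzdef, pi_norm_const, Real.norm_eq_abs, abs_of_pos (by linarith)]
      have hz1 : z ∈ recCone n K := hball (by
        rw [Metric.mem_ball, dist_eq_norm, hv00, sub_zero, hznorm]; linarith)
      have hz2 : -z ∈ recCone n K := hball (by
        rw [Metric.mem_ball, dist_eq_norm, hv00, sub_zero, norm_neg, hznorm]; linarith)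
      have hzero := pointed z ((hrecC z).mp hz1) ((hrecC (-z)).mp hz2)
      have hcomp := congrFun hzero ⟨0, hn1⟩
      rw [hzdef] at hcomp
      simp at hcomp
      linarith
    rcases lt_or_ge n 2 with hn2 | hn2
    · -- n = 1
      have htop : (Submodule.span ℝ {v}) = ⊤ := by
        apply Submodule.eq_top_of_finrank_eq
        rw [finrank_span_singleton hv0, Module.finrank_fin_fun]
        omega
      apply hL
      apply LinearMap.ext
      intro x
      have hx : x ∈ Submodule.span ℝ {v} := htop ▸ Submodule.mem_top
      obtain ⟨r, hr⟩ := Submodule.mem_span_singleton.mp hx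
      rw [← hr, map_smul, smul_eq_mul, hLv0, mul_zero]
      rfl
    -- now n ≥ 2 : build an unbounded edge avoiding the hyperplane
    obtain ⟨z₀, hz₀⟩ : ∃ z₀, L z₀ ≠ 0 := by
      by_contra hno; push_neg at hno
      exact hL (LinearMap.ext fun x => by rw [hno x]; rfl)
    obtain ⟨σv, hσ⟩ : ∃ σv, L σv < 0 := by
      rcases lt_or_gt_of_ne hz₀ with h | h
      · exact ⟨z₀, h⟩
      · exact ⟨-z₀, by rw [map_neg]; linarith⟩
    set δ := ε / (2 * (‖σv‖ + 1)) with hδ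
    have hδpos : 0 < δ := div_pos hε (by positivity)
    set w := v + δ • σv with hwdef
    have hwrec : w ∈ recCone n K := hball (by
      rw [Metric.mem_ball, dist_eq_norm, hwdef, add_sub_cancel_left, norm_smul,
        Real.norm_eq_abs, abs_of_pos hδpos, hδ, div_mul_eq_mul_div, div_lt_iff₀ (by positivity)]
      nlinarith [norm_nonneg σv])
    have hwC : ∀ i, A i w ≤ 0 := (hrecC w).mp hwrec
    have hwL : L w < 0 := by
      rw [hwdef, map_add, map_smul, smul_eq_mul, hLv0]
      nlinarith
    obtain ⟨u, huC, huL, huV⟩ := cone_walk A L pointed _ w le_rfl hwC hwL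
    have hu0 : u ≠ 0 := fun h => by rw [h, map_zero] at huL; exact lt_irrefl 0 huL
    obtain ⟨x₁, hx₁K, hx₁V⟩ := tighten_walk A cs u huC _ p₀ le_rfl ((hmemK p₀).mp hp₀K)
    -- slide back along u to the endpoint
    set J' : Finset (Fin m) := Finset.univ.filter (fun j => A j u < 0) with hJ'
    have hJ'ne : J'.Nonempty := by
      by_contra hno
      rw [Finset.not_nonempty_iff_eq_empty] at hno
      have hz : ∀ j, A j u = 0 := by
        intro j
        rcases lt_or_eq_of_le (huC j) with h | h
        · exfalso
          have hjm : j ∈ J' := by simp [hJ', h]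
          rw [hno] at hjm
          exact absurd hjm (Finset.notMem_empty j)
        · exact h
      exact hu0 (pointed u huC (fun i => by rw [map_neg, hz i, neg_zero]))
    set tstar := J'.sup' hJ'ne (fun j => (cs j - A j x₁) / A j u) with hts
    obtain ⟨jstar, hjstarJ, hjstar⟩ := Finset.exists_mem_eq_sup' hJ'ne
      (fun j => (cs j - A j x₁) / A j u)
    have hjstaru : A jstar u < 0 := (Finset.mem_filter.mp hjstarJ).2
    set q := x₁ + tstar • u with hq
    have hqapp : ∀ j, A j q = A j x₁ + tstar * A j u := fun j => by
      rw [hq, map_add, map_smul, smul_eq_mul]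
    have hqK : ∀ j, A j q ≤ cs j := by
      intro j
      rw [hqapp]
      rcases lt_or_eq_of_le (huC j) with h | h
      · have hjJ : j ∈ J' := by simp [hJ', h]
        have hle : (cs j - A j x₁) / A j u ≤ tstar := by
          rw [hts]; exact Finset.le_sup' (fun j => (cs j - A j x₁) / A j u) hjJ
        rw [div_le_iff_of_neg h] at hle
        linarith
      · rw [h, mul_zero, add_zero]; exact hx₁K j
    have hqKmem : q ∈ K := (hmemK q).mpr hqK
    have hqjstar : A jstar q = cs jstar := by
      have hsj : tstar = (cs jstar - A jstar x₁) / A jstar u := hts.trans hjstar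
      rw [hqapp, hsj, div_mul_cancel₀ _ (ne_of_lt hjstaru)]
      ring
    have hqtight : ∀ i, A i u = 0 → A i x₁ = cs i → A i q = cs i := by
      intro i hiu hix
      rw [hqapp, hiu, mul_zero, add_zero]; exact hix
    have hchain : ∀ z : Fin n → ℝ,
        (∀ i, A i u = 0 ∧ A i q = cs i → A i z = 0) → ∃ r : ℝ, z = r • u := by
      intro z hz
      apply huV
      apply hx₁V
      intro i hi
      exact hz i ⟨hi.1, hqtight i hi.1 hi.2⟩
    -- q is a vertex of K
    set Tq : Finset (Fin m) := Finset.univ.filter (fun i => A i q = cs i) with hTq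
    have hjstarTq : jstar ∈ Tq := by simp [hTq, hqjstar]
    set N := ∑ i ∈ Tq, A i with hN
    set eN := ∑ i ∈ Tq, cs i with heN
    have hNapp : ∀ x, N x = ∑ i ∈ Tq, A i x := by
      intro x; rw [hN, LinearMap.coe_sum, Finset.sum_apply]
    have hFD := fulldim_sum_ne_zero A cs hA K hKeq (by simpa [polyDim] using hdim)
    have hTqq : ∀ i ∈ Tq, A i q = cs i := fun i hi => (Finset.mem_filter.mp hi).2
    have hN0 : N ≠ 0 := hFD Tq ⟨jstar, hjstarTq⟩ q hqK hTqq
    have hNq : N q = eN := by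
      rw [hNapp, heN]; exact Finset.sum_congr rfl hTqq
    have hNle : ∀ x ∈ K, N x ≤ eN := by
      intro x hx
      rw [hNapp, heN]
      exact Finset.sum_le_sum (fun i _ => (hmemK x).mp hx i)
    have htightN : ∀ y, (∀ i, A i y ≤ cs i) → N y = eN → ∀ i ∈ Tq, A i y = cs i := by
      intro y hy hNy
      apply tight_of_sum_eq Tq (fun i => A i y) cs (fun i _ => hy i)
      rw [hNapp, heN] at hNy
      exact hNy
    have hvertexq : IsVertexOf n K q := by
      refine ⟨N, eN, hN0, ⟨q, hqKmem, hNq⟩, hNle, ?_⟩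
      apply Set.eq_of_subset_of_subset
      · intro x hx
        rw [Set.mem_singleton_iff] at hx
        subst hx
        exact ⟨hqKmem, hNq⟩
      · rintro x ⟨hxK, hxN⟩
        have htx := htightN x ((hmemK x).mp hxK) hxN
        have hdiff : ∀ i, A i u = 0 ∧ A i q = cs i → A i (x - q) = 0 := by
          intro i hi
          have hiTq : i ∈ Tq := by simp [hTq, hi.2]
          rw [map_sub, htx i hiTq, hi.2, sub_self]
        obtain ⟨r, hr⟩ := hchain (x - q) hdiff
        have hjs : A jstar (x - q) = 0 := by
          rw [map_sub, htx jstar hjstarTq, hqjstar, sub_self]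
        rw [hr, map_smul, smul_eq_mul] at hjs
        have hr0 : r = 0 := by
          rcases mul_eq_zero.mp hjs with h | h
          · exact h
          · exact absurd h (ne_of_lt hjstaru)
        rw [Set.mem_singleton_iff]
        have hxq : x - q = 0 := by rw [hr, hr0, zero_smul]
        exact sub_eq_zero.mp hxq
    have hqL : L q + c₀ < 0 := hFU2 q hvertexq
    -- the unbounded edge through q in direction u
    set SF : Finset (Fin m) := Finset.univ.filter (fun i => A i u = 0 ∧ A i q = cs i) with hSF
    have hSFne : SF.Nonempty := by
      by_contra hno
      rw [Finset.not_nonempty_iff_eq_empty] at hno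
      have hspan : (⊤ : Submodule ℝ (Fin n → ℝ)) ≤ Submodule.span ℝ {u} := by
        intro z _
        obtain ⟨r, hr⟩ := hchain z (fun i hi => by
          exfalso
          have him : i ∈ SF := by simp [hSF, hi.1, hi.2]
          rw [hno] at him
          exact absurd him (Finset.notMem_empty i))
        exact Submodule.mem_span_singleton.mpr ⟨r, hr.symm⟩
      have h1 : Module.finrank ℝ (Fin n → ℝ) ≤ 1 := by
        calc Module.finrank ℝ (Fin n → ℝ)
            = Module.finrank ℝ (⊤ : Submodule ℝ (Fin n → ℝ)) := (finrank_top ℝ _).symm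
          _ ≤ Module.finrank ℝ (Submodule.span ℝ {u}) := Submodule.finrank_mono hspan
          _ = 1 := finrank_span_singleton hu0
      rw [Module.finrank_fin_fun] at h1
      omega
    set NS := ∑ i ∈ SF, A i with hNS
    set eS := ∑ i ∈ SF, cs i with heS
    have hNSapp : ∀ x, NS x = ∑ i ∈ SF, A i x := by
      intro x; rw [hNS, LinearMap.coe_sum, Finset.sum_apply]
    have hSFq : ∀ i ∈ SF, A i q = cs i := fun i hi => ((Finset.mem_filter.mp hi).2).2
    have hSFu : ∀ i ∈ SF, A i u = 0 := fun i hi => ((Finset.mem_filter.mp hi).2).1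
    have hNS0 : NS ≠ 0 := hFD SF hSFne q hqK hSFq
    have hNSq : NS q = eS := by
      rw [hNSapp, heS]; exact Finset.sum_congr rfl hSFq
    have hNSle : ∀ x ∈ K, NS x ≤ eS := by
      intro x hx
      rw [hNSapp, heS]
      exact Finset.sum_le_sum (fun i _ => (hmemK x).mp hx i)
    set Aset : Set (Fin n → ℝ) := {x | ∃ t : ℝ, 0 ≤ t ∧ x = q + t • u} with hAs
    have hrayK : ∀ t : ℝ, 0 ≤ t → q + t • u ∈ K := by
      intro t ht
      rw [hmemK]
      intro i
      rw [map_add, map_smul, smul_eq_mul]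
      have hmn : t * A i u ≤ 0 := mul_nonpos_iff.mpr (Or.inl ⟨ht, huC i⟩)
      linarith [hqK i]
    have hAseteq : K ∩ {x | NS x = eS} = Aset := by
      apply Set.eq_of_subset_of_subset
      · rintro x ⟨hxK, hxNS⟩
        have htx : ∀ i ∈ SF, A i x = cs i := by
          apply tight_of_sum_eq SF (fun i => A i x) cs (fun i _ => (hmemK x).mp hxK i)
          rw [Set.mem_setOf_eq, hNSapp, heS] at hxNS
          exact hxNS
        have hdiff : ∀ i, A i u = 0 ∧ A i q = cs i → A i (x - q) = 0 := by
          intro i hi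
          have hiSF : i ∈ SF := by simp [hSF, hi.1, hi.2]
          rw [map_sub, htx i hiSF, hi.2, sub_self]
        obtain ⟨r, hr⟩ := hchain (x - q) hdiff
        have hjsx : A jstar x ≤ cs jstar := (hmemK x).mp hxK jstar
        have h3 : r * A jstar u ≤ 0 := by
          have h2 : A jstar (x - q) = A jstar x - cs jstar := by rw [map_sub, hqjstar]
          rw [hr, map_smul, smul_eq_mul] at h2
          linarith
        have hr0 : 0 ≤ r := by
          by_contra hneg
          push_neg at hneg
          nlinarith
        exact ⟨r, hr0, by rw [← hr]; abel⟩
      · rintro x ⟨t, ht, rfl⟩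
        refine ⟨hrayK t ht, ?_⟩
        show NS (q + t • u) = eS
        rw [hNSapp, heS]
        apply Finset.sum_congr rfl
        intro i hi
        rw [map_add, map_smul, smul_eq_mul, hSFu i hi, mul_zero, add_zero]
        exact hSFq i hi
    have hedge : IsEdgeOf n K Aset := by
      constructor
      · exact ⟨NS, eS, hNS0, ⟨q, hqKmem, hNSq⟩, hNSle, hAseteq.symm⟩
      · show Module.finrank ℝ (affineSpan ℝ Aset).direction = 1
        rw [direction_affineSpan]
        have hvs : vectorSpan ℝ Aset = Submodule.span ℝ {u} := by
          apply le_antisymm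
          · rw [vectorSpan_def]
            apply Submodule.span_le.mpr
            rintro z ⟨a, ha, b, hb, rfl⟩
            obtain ⟨s1, hs1, rfl⟩ := ha
            obtain ⟨s2, hs2, rfl⟩ := hb
            apply Submodule.mem_span_singleton.mpr
            refine ⟨s1 - s2, ?_⟩
            show (s1 - s2) • u = (q + s1 • u) - (q + s2 • u)
            rw [sub_smul]
            abel
          · apply Submodule.span_le.mpr
            rw [Set.singleton_subset_iff]
            have h1 : q + (1:ℝ) • u ∈ Aset := ⟨1, zero_le_one, rfl⟩
            have h0 : q + (0:ℝ) • u ∈ Aset := ⟨0, le_refl 0, rfl⟩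
            have hmem := vsub_mem_vectorSpan ℝ h1 h0
            have heq : (q + (1:ℝ) • u) -ᵥ (q + (0:ℝ) • u) = u := by
              show (q + (1:ℝ) • u) - (q + (0:ℝ) • u) = u
              rw [one_smul, zero_smul, add_zero, add_sub_cancel_left]
            rwa [heq] at hmem
        rw [hvs, finrank_span_singleton hu0]
    have hAunb : ¬ IsBounded Aset := by
      intro hb
      obtain ⟨R, hR⟩ := isBounded_iff_forall_norm_le.mp hb
      have hupos : 0 < ‖u‖ := by rw [norm_pos_iff]; exact hu0
      set t := (R + ‖q‖ + 1) / ‖u‖ with htdef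
      have hR0 : 0 ≤ R := le_trans (norm_nonneg _) (hR _ ⟨0, le_refl 0, by rw [zero_smul, add_zero]⟩)
      have htpos : 0 ≤ t := div_nonneg (by linarith [norm_nonneg q]) (le_of_lt hupos)
      have hmem : q + t • u ∈ Aset := ⟨t, htpos, rfl⟩
      have hn1 := hR _ hmem
      have h2 : ‖t • u‖ ≤ ‖q + t • u‖ + ‖q‖ := by
        calc ‖t • u‖ = ‖q + t • u - q‖ := by rw [add_sub_cancel_left]
          _ ≤ ‖q + t • u‖ + ‖q‖ := norm_sub_le _ _
      rw [norm_smul, Real.norm_eq_abs, abs_of_nonneg htpos, htdef,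
        div_mul_cancel₀ _ (ne_of_gt hupos)] at h2
      linarith
    obtain ⟨y, hyA, hyP⟩ := hFU1 Aset hedge hAunb
    obtain ⟨t, ht, rfl⟩ := hyA
    rw [Set.mem_setOf_eq, map_add, map_smul, smul_eq_mul] at hyP
    have hmn : t * L u ≤ 0 := mul_nonpos_iff.mpr (Or.inl ⟨ht, le_of_lt huL⟩)
    linarith
  -- now the construction of the sawing hyperplane
  have hT : ∀ p : Fin n → ℝ, ∃ t₀ : ℝ, 0 ≤ t₀ ∧ ∀ t, t₀ ≤ t → p + t • v ∈ K := by
    intro p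
    obtain ⟨M, hM⟩ := (Finset.univ.image (fun i => (A i p - cs i) / (-(A i v)))).bddAbove
    refine ⟨max M 0, le_max_right _ _, fun t ht => ?_⟩
    rw [hmemK]
    intro i
    rw [map_add, map_smul, smul_eq_mul]
    have hmemi : (A i p - cs i) / (-(A i v)) ∈
        (Finset.univ.image (fun i => (A i p - cs i) / (-(A i v)))) :=
      Finset.mem_image_of_mem _ (Finset.mem_univ i)
    have hMi : (A i p - cs i) / (-(A i v)) ≤ t :=
      le_trans (le_trans (hM hmemi) (le_max_left M 0)) ht
    have hposi : (0:ℝ) < -(A i v) := by linarith [hAiv i]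
    rw [div_le_iff₀ hposi] at hMi
    nlinarith
  choose T hT0 hTspec using hT
  obtain ⟨B₀, hB₀⟩ := (hG.image T).bddAbove
  set B := max B₀ 0 with hB
  have hBT : ∀ p ∈ G, T p ≤ B := fun p hp =>
    le_trans (hB₀ (Set.mem_image_of_mem T hp)) (le_max_left _ _)
  have hB0 : (0:ℝ) ≤ B := le_max_right _ _
  have hcont : ∀ c : ℝ, (∀ p ∈ G, B ≤ (-(L p) - c) / (L v)) →
      ∀ p ∈ G, ∃ z : Fin n → ℝ,
        {x | ∃ t : ℝ, 0 ≤ t ∧ x = p + t • v} ∩ (K ∩ {x | L x + c = 0}) = {z} := by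
    intro c hc p hp
    set tp := (-(L p) - c) / (L v) with htp
    have htpB : B ≤ tp := hc p hp
    refine ⟨p + tp • v, ?_⟩
    ext x
    simp only [Set.mem_inter_iff, Set.mem_setOf_eq, Set.mem_singleton_iff]
    constructor
    · rintro ⟨⟨t, ht0, rfl⟩, hxK, hxP⟩
      rw [map_add, map_smul, smul_eq_mul] at hxP
      have hteq : t = tp := by
        rw [htp, eq_div_iff hLv]
        linarith
      rw [hteq]
    · rintro rfl
      refine ⟨⟨tp, ?_, rfl⟩, ?_, ?_⟩
      · linarith [hT0 p, hBT p hp]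
      · exact hTspec p tp (by linarith [hBT p hp])
      · rw [map_add, map_smul, smul_eq_mul, htp, div_mul_cancel₀ _ hLv]
        ring
  rcases lt_or_gt_of_ne hLv with hneg | hpos
  · obtain ⟨c, hcub⟩ := (hG.image (fun p => -(L p) - B * (L v))).bddAbove
    refine ⟨c, hcont c ?_⟩
    intro p hp
    have hub : -(L p) - B * (L v) ≤ c := hcub (Set.mem_image_of_mem _ hp)
    rw [le_div_iff_of_neg hneg]
    linarith
  · obtain ⟨c, hclb⟩ := (hG.image (fun p => -(L p) - B * (L v))).bddBelow
    refine ⟨c, hcont c ?_⟩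
    intro p hp
    have hlb : c ≤ -(L p) - B * (L v) := hclb (Set.mem_image_of_mem _ hp)
    rw [le_div_iff₀ hpos]
    linarith
end

section
/- Let K ⊂ ℝ^n be an unbounded non-degenerate convex polyhedron with K ⊆ {x ∈ ℝ^n : x_n > 0}, and suppose that the function x ↦ x_n attains its minimum on K at exactly one point. Then the set {(x₁/x_n, …, x_{n−1}/x_n, 1/x_n) : x ∈ K} ⊆ ℝ^n is bounded. -/
open Bornology Pointwise

set_option maxHeartbeats 1000000 in
/-- Section 1.3.1: if `K ⊆ {x_n > 0}` is an unbounded non-degenerate convex polyhedron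
on which `x ↦ x_n` attains its minimum at exactly one point, then the image of `K`
under `x ↦ (x₁/x_n, …, x_{n-1}/x_n, 1/x_n)` is bounded. -/
theorem image_under_inversion_is_bounded (n : ℕ) (hn : 1 ≤ n)
    (K : Set (Fin n → ℝ)) (hpoly : IsConvexPolyhedron n K)
    (hunb : ¬ IsBounded K) (hnd : ∃ p, IsVertexOf n K p)
    (hpos : ∀ x ∈ K, 0 < x ⟨n - 1, by omega⟩)
    (hmin : ∃! z, z ∈ K ∧ ∀ x ∈ K, z ⟨n - 1, by omega⟩ ≤ x ⟨n - 1, by omega⟩) :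
    IsBounded {y : Fin n → ℝ | ∃ x ∈ K,
      y = fun i : Fin n => (if (i : ℕ) = n - 1 then 1 else x i) / x ⟨n - 1, by omega⟩} := by
  classical
  obtain ⟨m0, L, c, hLne, hK⟩ := hpoly
  obtain ⟨z, ⟨hzK, hzmin⟩, huniq⟩ := hmin
  set N : Fin n := ⟨n - 1, by omega⟩ with hNdef
  have hNval : (N : ℕ) = n - 1 := by rw [hNdef]
  have hm : 0 < z N := hpos z hzK
  by_contra hub
  rw [isBounded_iff_forall_norm_le] at hub
  push_neg at hub
  have main : ∀ k : ℕ, ∃ w, w ∈ K ∧ ((k : ℝ) + 1) * w N < ‖w‖ := by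
    intro k
    obtain ⟨y0, hyS, hy0⟩ := hub ((k : ℝ) + 1 + 1 / z N)
    obtain ⟨x, hxK, rfl⟩ := hyS
    refine ⟨x, hxK, ?_⟩
    have hxN : 0 < x N := hpos x hxK
    have hmx : z N ≤ x N := hzmin x hxK
    have hne : Nonempty (Fin n) := ⟨N⟩
    have hy : ((k : ℝ) + 1 + 1 / z N) <
        ‖(fun i : Fin n => (if (i : ℕ) = n - 1 then 1 else x i) / x N)‖ := hy0
    obtain ⟨i, hi⟩ :=
      Finite.exists_max (fun j : Fin n =>
        ‖(if ((j : ℕ) = n - 1) then (1:ℝ) else x j) / x N‖)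
    have h1 : ((k : ℝ) + 1 + 1 / z N) <
        ‖(if ((i : ℕ) = n - 1) then (1:ℝ) else x i) / x N‖ :=
      lt_of_lt_of_le hy ((pi_norm_le_iff_of_nonneg (norm_nonneg _)).2 hi)
    have hiN : (i : ℕ) ≠ n - 1 := by
      intro h
      rw [if_pos h] at h1
      have h2 : |1 / x N| = 1 / x N := abs_of_pos (by positivity)
      have h3 : 1 / x N ≤ 1 / z N := one_div_le_one_div_of_le hm hmx
      rw [Real.norm_eq_abs, h2] at h1
      have hk0 : (0:ℝ) ≤ (k : ℝ) := Nat.cast_nonneg k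
      linarith
    rw [if_neg hiN] at h1
    have h4 : ‖x i / x N‖ = |x i| / x N := by
      rw [Real.norm_eq_abs, abs_div, abs_of_pos hxN]
    rw [h4] at h1
    have h5 : ((k : ℝ) + 1 + 1 / z N) * x N < |x i| := (lt_div_iff₀ hxN).1 h1
    have h6 : |x i| ≤ ‖x‖ := norm_le_pi_norm x i
    have h7 : (0:ℝ) < 1 / z N := by positivity
    nlinarith
  choose x hxK hxbig using main
  have hxN : ∀ k, 0 < x k N := fun k => hpos _ (hxK k)
  have hmx : ∀ k, z N ≤ x k N := fun k => hzmin _ (hxK k)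
  have hxnorm : ∀ k, 0 < ‖x k‖ := by
    intro k
    have : (0:ℝ) < ((k : ℝ) + 1) * x k N := mul_pos (by positivity) (hxN k)
    linarith [hxbig k]
  set u : ℕ → (Fin n → ℝ) := fun k => ‖x k‖⁻¹ • x k with hu
  have hu1 : ∀ k, u k ∈ Metric.sphere (0 : Fin n → ℝ) 1 := by
    intro k
    rw [mem_sphere_zero_iff_norm, hu]
    simp only [norm_smul, norm_inv, norm_norm]
    exact inv_mul_cancel₀ (hxnorm k).ne'
  obtain ⟨v, hvmem, φ, hφ, hφt⟩ :=
    (isCompact_sphere (0 : Fin n → ℝ) 1).tendsto_subseq hu1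
  have hφtop : Filter.Tendsto φ Filter.atTop Filter.atTop := hφ.tendsto_atTop
  have hlow : ∀ k : ℕ, ((k : ℝ) + 1) * z N ≤ ‖x k‖ := by
    intro k
    have h1 : ((k : ℝ) + 1) * z N ≤ ((k : ℝ) + 1) * x k N :=
      mul_le_mul_of_nonneg_left (hmx k) (by positivity)
    linarith [hxbig k]
  have hnormtop : Filter.Tendsto (fun k => ‖x k‖) Filter.atTop Filter.atTop := by
    refine Filter.tendsto_atTop_mono hlow ?_
    exact (Filter.tendsto_atTop_add_const_right _ 1
      tendsto_natCast_atTop_atTop).atTop_mul_const hm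
  have hnormtopφ : Filter.Tendsto (fun k => ‖x (φ k)‖) Filter.atTop Filter.atTop :=
    hnormtop.comp hφtop
  have hinv0 : Filter.Tendsto (fun k => ‖x (φ k)‖⁻¹) Filter.atTop (nhds 0) :=
    hnormtopφ.inv_tendsto_atTop
  have hLv : ∀ j, L j v ≤ 0 := by
    intro j
    have hcont : Continuous (L j) := (L j).continuous_of_finiteDimensional
    have h1 : Filter.Tendsto (fun k => L j (u (φ k))) Filter.atTop (nhds (L j v)) :=
      (hcont.tendsto v).comp hφt
    have h2 : Filter.Tendsto (fun k => ‖x (φ k)‖⁻¹ * c j) Filter.atTop (nhds 0) := by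
      simpa using hinv0.mul_const (c j)
    refine le_of_tendsto_of_tendsto' h1 h2 (fun k => ?_)
    have h3 : L j (x (φ k)) ≤ c j := by
      have h4 := hxK (φ k)
      rw [hK] at h4
      exact h4 j
    have h5 : L j (u (φ k)) = ‖x (φ k)‖⁻¹ * L j (x (φ k)) := by
      rw [hu]
      simp [map_smul]
    rw [h5]
    exact mul_le_mul_of_nonneg_left h3 (by positivity)
  have hvN : v N = 0 := by
    have heval : Filter.Tendsto (fun k => u (φ k) N) Filter.atTop (nhds (v N)) :=
      ((continuous_apply N).tendsto v).comp hφt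
    have h0le : ∀ k : ℕ, (0:ℝ) ≤ u (φ k) N := by
      intro k
      rw [hu]
      exact mul_nonneg (inv_nonneg.2 (norm_nonneg _)) (hxN _).le
    have hle : ∀ k : ℕ, u (φ k) N ≤ ((k:ℝ)+1)⁻¹ := by
      intro k
      have h1 : ((φ k : ℝ) + 1) * x (φ k) N < ‖x (φ k)‖ := hxbig (φ k)
      have h2 : (k:ℝ) + 1 ≤ (φ k : ℝ) + 1 := by
        have h3 : k ≤ φ k := hφ.id_le k
        have h4 : (k:ℝ) ≤ (φ k : ℝ) := by exact_mod_cast h3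
        linarith
      have ha : x (φ k) N ≤ ‖x (φ k)‖ / ((k:ℝ)+1) := by
        rw [le_div_iff₀ (by positivity)]
        calc x (φ k) N * ((k:ℝ)+1) ≤ x (φ k) N * ((φ k : ℝ)+1) := by
              exact mul_le_mul_of_nonneg_left h2 (hxN _).le
        _ = ((φ k : ℝ)+1) * x (φ k) N := mul_comm _ _
        _ ≤ ‖x (φ k)‖ := h1.le
      have hb : u (φ k) N = ‖x (φ k)‖⁻¹ * x (φ k) N := by rw [hu]; rfl
      rw [hb]
      calc ‖x (φ k)‖⁻¹ * x (φ k) N ≤ ‖x (φ k)‖⁻¹ * (‖x (φ k)‖ / ((k:ℝ)+1)) :=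
            mul_le_mul_of_nonneg_left ha (by positivity)
      _ = ((k:ℝ)+1)⁻¹ := by
            rw [div_eq_mul_inv, ← mul_assoc, inv_mul_cancel₀ (hxnorm (φ k)).ne', one_mul]
    have hzero : Filter.Tendsto (fun k : ℕ => ((k:ℝ)+1)⁻¹) Filter.atTop (nhds 0) := by
      simpa [one_div] using (tendsto_one_div_add_atTop_nhds_zero_nat : Filter.Tendsto (fun n : ℕ => 1 / ((n : ℝ) + 1)) Filter.atTop (nhds 0))
    have := tendsto_of_tendsto_of_tendsto_of_le_of_le
      (tendsto_const_nhds : Filter.Tendsto (fun _ : ℕ => (0:ℝ)) Filter.atTop (nhds 0))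
      hzero h0le hle
    exact tendsto_nhds_unique heval this
  have hzvK : z + v ∈ K := by
    rw [hK]
    intro j
    have hz : L j z ≤ c j := by
      have h := hzK
      rw [hK] at h
      exact h j
    have h2 : L j (z + v) = L j z + L j v := map_add _ _ _
    linarith [hLv j]
  have heq : z + v = z := by
    refine huniq (z + v) ⟨hzvK, fun w hw => ?_⟩
    have h1 : (z + v) N = z N := by
      simp only [Pi.add_apply, hvN, add_zero]
    exact h1.trans_le (hzmin w hw)
  have hv0 : v = 0 := by
    have := heq
    rwa [add_eq_left] at this
  rw [mem_sphere_zero_iff_norm, hv0, norm_zero] at hvmem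
  exact one_ne_zero hvmem.symm
end
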